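/- arXiv:1309.0046 — 5 statements merged into one kernel-verified Lean document; each statement's English description precedes it below -/
import Mathlib

section
/- Let X be a nonnegative continuous local martingale on [0,T] with X_0 = x ≥ 0, and let τ^β := inf{s ≥ 0 : X_s ≥ β} ∧ T. Then lim_{β→∞} β·P(τ^β < T) = x − E[X_T]; in particular the limit is at most x. -/
open MeasureTheory Filter Set
open scoped Topology

open scoped ENNReal NNReal

/-- `M` is a local martingale w.r.t. the filtration `ℱ` under `P`: there is a
localizing sequence of stopping times increasing a.s. to `∞` such that each
stopped process is a martingale. -/
def IsLocMart {Ω : Type*} {m : MeasurableSpace Ω} (ℱ : Filtration ℝ m)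
    (M : ℝ → Ω → ℝ) (P : Measure Ω) : Prop :=
  ∃ π : ℕ → Ω → ℝ, (∀ n, IsStoppingTime ℱ (fun ω => (π n ω : WithTop ℝ))) ∧
    (∀ ω, Monotone fun n => π n ω) ∧
    (∀ᵐ ω ∂P, Tendsto (fun n => π n ω) atTop atTop) ∧
    ∀ n, Martingale (stoppedProcess M (fun ω => (π n ω : WithTop ℝ))) ℱ P



section aux
variable {Ω : Type*} {m : MeasurableSpace Ω} {ℱ : Filtration ℝ m}
  {X : ℝ → Ω → ℝ} {x T β : ℝ}

lemma hit_mem (hcont : ∀ ω, Continuous fun s => X s ω) {ω : Ω}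
    (h : ∃ j ∈ Set.Icc (0:ℝ) T, X j ω ∈ Ici β) :
    hittingBtwn X (Ici β) 0 T ω ∈ Set.Icc (0:ℝ) T ∩ {i | X i ω ∈ Ici β} := by
  have hS : IsClosed (Set.Icc (0:ℝ) T ∩ {i | X i ω ∈ Ici β}) :=
    isClosed_Icc.inter (isClosed_Ici.preimage (hcont ω))
  rw [hittingBtwn, if_pos h]
  obtain ⟨j, hj, hjs⟩ := h
  exact hS.csInf_mem ⟨j, hj, hjs⟩ bddBelow_Icc.inter_of_left

lemma hit_le_iff (hcont : ∀ ω, Continuous fun s => X s ω) {ω : Ω} {t : ℝ}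
    (htT : t < T) :
    hittingBtwn X (Ici β) 0 T ω ≤ t ↔ ∃ s ∈ Set.Icc (0:ℝ) t, β ≤ X s ω := by
  constructor
  · intro h
    by_cases hex : ∃ j ∈ Set.Icc (0:ℝ) T, X j ω ∈ Ici β
    · obtain ⟨⟨h0, -⟩, hmem⟩ := hit_mem hcont hex
      exact ⟨_, ⟨h0, h⟩, hmem⟩
    · rw [hittingBtwn, if_neg hex] at h
      exact absurd h (not_le.2 htT)
  · rintro ⟨s, ⟨hs0, hst⟩, hβ⟩
    have hex : ∃ j ∈ Set.Icc (0:ℝ) T, X j ω ∈ Ici β :=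
      ⟨s, ⟨hs0, hst.trans htT.le⟩, hβ⟩
    rw [hittingBtwn, if_pos hex]
    refine (csInf_le bddBelow_Icc.inter_of_left ?_).trans hst
    exact (show s ∈ Set.Icc (0:ℝ) T ∩ {i | X i ω ∈ Ici β} from ⟨⟨hs0, hst.trans htT.le⟩, hβ⟩)

lemma meas_exists (hadp : Adapted ℱ X) (hcont : ∀ ω, Continuous fun s => X s ω)
    {t : ℝ} (ht : 0 ≤ t) :
    MeasurableSet[ℱ t] {ω | ∃ s ∈ Set.Icc (0:ℝ) t, β ≤ X s ω} := by
  classical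
  set D : Set ℝ := insert 0 (insert t ((fun q : ℚ => (q:ℝ)) '' {q : ℚ | 0 ≤ (q:ℝ) ∧ (q:ℝ) ≤ t}))
    with hD
  have hDcount : D.Countable :=
    (((Set.countable_range _).mono (image_subset_range _ _)).insert t).insert 0
  have hDsub : D ⊆ Set.Icc 0 t := by
    rintro s (rfl | rfl | ⟨q, ⟨hq0, hqt⟩, rfl⟩)
    · exact ⟨le_rfl, ht⟩
    · exact ⟨ht, le_rfl⟩
    · exact ⟨hq0, hqt⟩
  have hDdense : Set.Icc 0 t ⊆ closure D := by
    intro s hs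
    rcases eq_or_lt_of_le hs.1 with rfl | h0s
    · exact subset_closure (Or.inl rfl)
    rcases eq_or_lt_of_le hs.2 with rfl | hst
    · exact subset_closure (Or.inr (Or.inl rfl))
    rw [mem_closure_iff]
    intro U hU hsU
    have : (U ∩ Ioo 0 t).Nonempty := ⟨s, hsU, h0s, hst⟩
    obtain ⟨q, hq⟩ := Rat.denseRange_cast.exists_mem_open (hU.inter isOpen_Ioo) this
    exact ⟨(q:ℝ), hq.1, Or.inr (Or.inr ⟨q, ⟨hq.2.1.le, hq.2.2.le⟩, rfl⟩)⟩
  have hset : {ω | ∃ s ∈ Set.Icc (0:ℝ) t, β ≤ X s ω}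
      = ⋂ j : ℕ, ⋃ s ∈ D, {ω | β - (1:ℝ)/(j+1) < X s ω} := by
    ext ω
    simp only [mem_setOf_eq, mem_iInter, mem_iUnion, exists_prop]
    constructor
    · rintro ⟨s, hs, hβ⟩ j
      have hsc : s ∈ closure D := hDdense hs
      have : IsOpen {r : ℝ | β - (1:ℝ)/(j+1) < X r ω} :=
        isOpen_lt continuous_const (hcont ω)
      have hsmem : s ∈ {r : ℝ | β - (1:ℝ)/(j+1) < X r ω} := by
        have h0 : (0:ℝ) < 1/(j+1) := by positivity
        exact lt_of_lt_of_le (sub_lt_self β h0) hβ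
      obtain ⟨r, hrU, hrD⟩ := (mem_closure_iff.1 hsc) _ this hsmem
      exact ⟨r, hrD, hrU⟩
    · intro h
      choose f hfD hfβ using h
      have hfIcc : ∀ j, f j ∈ Set.Icc (0:ℝ) t := fun j => hDsub (hfD j)
      obtain ⟨s, hs, φ, hφmono, hφ⟩ := isCompact_Icc.tendsto_subseq hfIcc
      refine ⟨s, hs, ?_⟩
      have h1 : Tendsto (fun j => X (f (φ j)) ω) atTop (𝓝 (X s ω)) :=
        ((hcont ω).continuousAt.tendsto).comp hφ
      have h2 : Tendsto (fun j : ℕ => β - (1:ℝ)/(φ j + 1)) atTop (𝓝 (β - 0)) := by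
        refine Tendsto.const_sub _ ?_
        have : Tendsto (fun j : ℕ => ((φ j : ℝ) + 1)) atTop atTop :=
          tendsto_atTop_add_const_right _ _
            (tendsto_natCast_atTop_atTop.comp hφmono.tendsto_atTop)
        exact this.inv_tendsto_atTop.congr (by intro j; simp [one_div])
      rw [sub_zero] at h2
      exact le_of_tendsto_of_tendsto' h2 h1 fun j => (hfβ (φ j)).le
  rw [hset]
  refine MeasurableSet.iInter fun j => ?_
  refine MeasurableSet.biUnion hDcount fun s hsD => ?_
  have hst : s ≤ t := (hDsub hsD).2
  exact ℱ.mono hst _ ((hadp s) measurableSet_Ioi)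

lemma hit_isStoppingTime (hadp : Adapted ℱ X) (hcont : ∀ ω, Continuous fun s => X s ω)
    (hT : 0 < T) : IsStoppingTime ℱ (fun ω => ((hittingBtwn X (Ici β) 0 T ω : ℝ) : WithTop ℝ)) := by
  intro t
  simp only [WithTop.coe_le_coe]
  rcases lt_or_ge t 0 with ht | ht
  · have : {ω | hittingBtwn X (Ici β) 0 T ω ≤ t} = ∅ := by
      ext ω
      simp only [mem_setOf_eq, mem_empty_iff_false, iff_false, not_le]
      exact lt_of_lt_of_le ht (le_hittingBtwn hT.le ω)
    rw [this]; exact @MeasurableSet.empty _ (ℱ t)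
  rcases lt_or_ge t T with htT | htT
  · have : {ω | hittingBtwn X (Ici β) 0 T ω ≤ t} = {ω | ∃ s ∈ Set.Icc (0:ℝ) t, β ≤ X s ω} := by
      ext ω; exact hit_le_iff hcont htT
    rw [this]; exact meas_exists hadp hcont ht
  · have : {ω | hittingBtwn X (Ici β) 0 T ω ≤ t} = univ := by
      ext ω
      simp only [mem_setOf_eq, mem_univ, iff_true]
      exact (hittingBtwn_le ω).trans htT
    rw [this]; exact @MeasurableSet.univ _ (ℱ t)

end aux

section aux2
variable {Ω : Type*} {X : ℝ → Ω → ℝ} {x T β : ℝ}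

lemma X_le_beta (hcont : ∀ ω, Continuous fun s => X s ω) {ω : Ω}
    (hw : X 0 ω < β) {s : ℝ} (hs0 : 0 ≤ s) (hs : s ≤ hittingBtwn X (Ici β) 0 T ω) :
    X s ω ≤ β := by
  rcases eq_or_lt_of_le hs with rfl | hlt
  swap
  · exact (not_le.1 (notMem_of_lt_hittingBtwn hlt hs0)).le
  -- s = hitting
  set τ := hittingBtwn X (Ici β) 0 T ω with hτ
  rcases eq_or_lt_of_le hs0 with h0 | h0
  · rw [← h0]; exact hw.le
  have htend : Tendsto (fun r => X r ω) (𝓝[<] τ) (𝓝 (X τ ω)) :=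
    ((hcont ω).tendsto τ).mono_left nhdsWithin_le_nhds
  refine le_of_tendsto htend ?_
  filter_upwards [Ioo_mem_nhdsLT_of_mem (⟨h0, le_rfl⟩ : τ ∈ Set.Ioc (0:ℝ) τ)] with r hr
  exact (not_le.1 (notMem_of_lt_hittingBtwn hr.2 hr.1.le)).le

lemma X_at_hitting (hcont : ∀ ω, Continuous fun s => X s ω) {ω : Ω}
    (hw : X 0 ω < β) (h : hittingBtwn X (Ici β) 0 T ω < T) :
    X (hittingBtwn X (Ici β) 0 T ω) ω = β := by
  have hex : ∃ j ∈ Set.Icc (0:ℝ) T, X j ω ∈ Ici β := by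
    by_contra hex
    rw [hittingBtwn, if_neg hex] at h
    exact lt_irrefl _ h
  have hmem := hit_mem hcont hex
  have hβle : β ≤ X (hittingBtwn X (Ici β) 0 T ω) ω := hmem.2
  have hle : X (hittingBtwn X (Ici β) 0 T ω) ω ≤ β :=
    X_le_beta hcont hw hmem.1.1 le_rfl
  linarith

lemma eventually_no_hit (hcont : ∀ ω, Continuous fun s => X s ω) (hT : 0 < T) (ω : Ω) :
    ∀ᶠ β in (atTop : Filter ℝ), hittingBtwn X (Ici β) 0 T ω = T := by
  obtain ⟨C, hC⟩ := (isCompact_Icc.image_of_continuousOn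
    ((hcont ω).continuousOn : ContinuousOn (fun s => X s ω) (Set.Icc 0 T))).bddAbove
  filter_upwards [eventually_gt_atTop C] with β hβ
  rw [hittingBtwn, if_neg]
  rintro ⟨j, hj, hjβ⟩
  exact absurd (le_trans hjβ (hC (mem_image_of_mem _ hj))) (not_le.2 hβ)

end aux2


noncomputable def disc (T : ℝ) (k : ℕ) (r : ℝ) : ℝ := ⌈r / (T / 2 ^ k)⌉ * (T / 2 ^ k)

section disc
variable {T r t : ℝ} {k : ℕ}

lemma cpos (hT : 0 < T) : 0 < T / 2 ^ k := by positivity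

lemma le_disc (hT : 0 < T) : r ≤ disc T k r := by
  have h := Int.le_ceil (r / (T / 2 ^ k))
  calc r = r / (T / 2 ^ k) * (T / 2 ^ k) := (div_mul_cancel₀ _ (cpos hT).ne').symm
  _ ≤ _ := mul_le_mul_of_nonneg_right h (cpos hT).le

lemma disc_le (hT : 0 < T) (h : r ≤ T) : disc T k r ≤ T := by
  have h1 : r / (T / 2 ^ k) ≤ ((2 ^ k : ℤ) : ℝ) := by
    rw [div_le_iff₀ (cpos hT)]
    push_cast
    rw [mul_div_cancel₀ _ (by positivity : (2:ℝ) ^ k ≠ 0)]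
    exact h
  have h2 : (⌈r / (T / 2 ^ k)⌉ : ℝ) ≤ ((2 ^ k : ℤ) : ℝ) := by
    exact_mod_cast Int.ceil_le.2 h1
  calc disc T k r ≤ ((2^k : ℤ) : ℝ) * (T / 2 ^ k) :=
        mul_le_mul_of_nonneg_right h2 (cpos hT).le
  _ = T := by push_cast; field_simp

lemma disc_nonneg (hT : 0 < T) (h : 0 ≤ r) : 0 ≤ disc T k r :=
  h.trans (le_disc hT)

lemma disc_lt (hT : 0 < T) : disc T k r < r + T / 2 ^ k := by
  have h := Int.ceil_lt_add_one (r / (T / 2 ^ k))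
  calc disc T k r < (r / (T / 2 ^ k) + 1) * (T / 2 ^ k) :=
        mul_lt_mul_of_pos_right h (cpos (k := k) hT)
  _ = r + T / 2 ^ k := by field_simp

lemma disc_le_iff (hT : 0 < T) : disc T k r ≤ t ↔ r ≤ ⌊t / (T / 2 ^ k)⌋ * (T / 2 ^ k) := by
  rw [disc, ← le_div_iff₀ (cpos hT), ← Int.le_floor, Int.ceil_le, div_le_iff₀ (cpos hT)]

lemma floor_mul_le (hT : 0 < T) : (⌊t / (T / 2 ^ k)⌋ : ℝ) * (T / 2 ^ k) ≤ t := by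
  rw [← le_div_iff₀ (cpos hT)]
  exact Int.floor_le _

lemma tendsto_disc (hT : 0 < T) (r : ℝ) :
    Tendsto (fun k : ℕ => disc T k r) atTop (𝓝 r) := by
  have h0 : Tendsto (fun k : ℕ => r + T * (2⁻¹ : ℝ) ^ k) atTop (𝓝 (r + T * 0)) :=
    tendsto_const_nhds.add ((tendsto_pow_atTop_nhds_zero_of_lt_one (by norm_num)
      (by norm_num)).const_mul T)
  rw [mul_zero, add_zero] at h0
  refine tendsto_of_tendsto_of_tendsto_of_le_of_le tendsto_const_nhds h0
    (fun k => le_disc hT) fun k => ?_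
  have := disc_lt (r := r) (k := k) hT
  have heq : T / 2 ^ k = T * (2⁻¹ : ℝ) ^ k := by rw [div_eq_mul_inv, inv_pow]
  linarith [heq ▸ this]

lemma disc_range_countable (T : ℝ) (k : ℕ) :
    (Set.range fun r => disc T k r).Countable := by
  have : (Set.range fun z : ℤ => (z : ℝ) * (T / 2 ^ k)).Countable := countable_range _
  exact this.mono (by rintro - ⟨r, rfl⟩; exact ⟨⌈r / (T / 2 ^ k)⌉, rfl⟩)

end disc

section core
variable {Ω : Type*} {m : MeasurableSpace Ω}

theorem key_integral (ℱ : Filtration ℝ m) (P : Measure Ω) [IsProbabilityMeasure P]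
    (X : ℝ → Ω → ℝ) (x T β : ℝ) (hT : 0 < T) (hx : 0 ≤ x) (hxβ : x < β)
    (hX0 : ∀ ω, X 0 ω = x)
    (hcont : ∀ ω, Continuous fun s => X s ω)
    (hnonneg : ∀ s ω, 0 ≤ X s ω)
    (π : ℕ → Ω → ℝ) (hπst : ∀ n, IsStoppingTime ℱ (fun ω => (π n ω : WithTop ℝ)))
    (hπmono : ∀ ω, Monotone fun n => π n ω)
    (hπtend : ∀ᵐ ω ∂P, Tendsto (fun n => π n ω) atTop atTop)
    (hπmart : ∀ n, Martingale (stoppedProcess X (fun ω => (π n ω : WithTop ℝ))) ℱ P)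
    (hadp : Adapted ℱ X) :
    ∫ ω, X (hittingBtwn X (Ici β) 0 T ω) ω ∂P = x := by
  set τ : Ω → ℝ := hittingBtwn X (Ici β) 0 T with hτdef
  have hτst : IsStoppingTime ℱ (fun ω => (τ ω : WithTop ℝ)) := hit_isStoppingTime hadp hcont hT
  have hτ0 : ∀ ω, 0 ≤ τ ω := fun ω => le_hittingBtwn hT.le ω
  have hτT : ∀ ω, τ ω ≤ T := fun ω => hittingBtwn_le ω
  -- the sets B n
  set B : ℕ → Set Ω := fun n => {ω | 0 ≤ π n ω} with hBdef
  have hBmeas0 : ∀ n, MeasurableSet[ℱ 0] (B n) := by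
    intro n
    have : B n = (⋃ j : ℕ, {ω | π n ω ≤ -(1/(j+1))})ᶜ := by
      ext ω
      simp only [hBdef, mem_setOf_eq, compl_iUnion, mem_iInter, mem_compl_iff, not_le]
      constructor
      · intro h j
        have : (0:ℝ) < 1/(j+1) := by positivity
        linarith
      · intro h
        by_contra hneg
        push_neg at hneg
        obtain ⟨j, hj⟩ := exists_nat_one_div_lt (show (0:ℝ) < -(π n ω) by linarith)
        have := h j
        linarith
    rw [this]
    refine MeasurableSet.compl (MeasurableSet.iUnion fun j => ?_)
    exact ℱ.mono (neg_nonpos.2 (by positivity : (0:ℝ) ≤ 1/((j:ℝ)+1))) _ (by simpa only [WithTop.coe_le_coe] using hπst n (-(1/((j:ℝ)+1))))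
  have hBmeas : ∀ n, MeasurableSet (B n) := fun n => ℱ.le 0 _ (hBmeas0 n)
  -- identity for fixed n
  have IDENT2 : ∀ n, ∫ ω in B n, X (min (τ ω) (π n ω)) ω ∂P = x * (P (B n)).toReal := by
    intro n
    set M : ℝ → Ω → ℝ := stoppedProcess X (fun ω => (π n ω : WithTop ℝ)) with hMdef
    have hM : Martingale M ℱ P := hπmart n
    -- discretized stopping times
    set τk : ℕ → Ω → ℝ := fun k ω => disc T k (τ ω) with hτkdef
    have hτkst : ∀ k, IsStoppingTime ℱ (fun ω => (τk k ω : WithTop ℝ)) := by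
      intro k t
      simp only [WithTop.coe_le_coe]
      have hset : {ω | τk k ω ≤ t} = {ω | τ ω ≤ ⌊t / (T / 2 ^ k)⌋ * (T / 2 ^ k)} := by
        ext ω; exact disc_le_iff hT
      rw [hset]
      exact ℱ.mono (floor_mul_le hT) _
        (by simpa only [WithTop.coe_le_coe] using hτst (⌊t / (T / 2 ^ k)⌋ * (T / 2 ^ k)))
    have hτkT : ∀ k ω, (τk k ω : WithTop ℝ) ≤ T := fun k ω =>
      WithTop.coe_le_coe.2 (disc_le hT (hτT ω))
    have hτk0 : ∀ k ω, 0 ≤ τk k ω := fun k ω => (hτ0 ω).trans (le_disc hT)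
    have hcount : ∀ k, (Set.range (fun ω => (τk k ω : WithTop ℝ))).Countable := fun k =>
      ((disc_range_countable T k).image (fun r : ℝ => (r : WithTop ℝ))).mono
        (by rintro - ⟨ω, rfl⟩; exact ⟨disc T k (τ ω), ⟨τ ω, rfl⟩, rfl⟩)
    -- optional sampling
    have hOS : ∀ k, stoppedValue M (fun ω => (τk k ω : WithTop ℝ)) =ᵐ[P]
        P[M T | ((hτkst k).measurableSpace)] := fun k =>
      hM.stoppedValue_ae_eq_condExp_of_le_const_of_countable_range (hτkst k) (hτkT k) (hcount k)
    -- B n is measurable wrt the stopped sigma algebra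
    have hBG : ∀ k, MeasurableSet[(hτkst k).measurableSpace] (B n) := by
      intro k
      refine ⟨(le_iSup (fun t => ℱ t) (0:ℝ)) _ (hBmeas0 n), fun t => ?_⟩
      show MeasurableSet[ℱ t] (B n ∩ {ω | (τk k ω : WithTop ℝ) ≤ t})
      simp only [WithTop.coe_le_coe]
      rcases lt_or_ge t 0 with ht | ht
      · have : {ω | τk k ω ≤ t} = ∅ := by
          ext ω
          simp only [mem_setOf_eq, mem_empty_iff_false, iff_false, not_le]
          exact lt_of_lt_of_le ht (hτk0 k ω)
        rw [this, inter_empty]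
        exact @MeasurableSet.empty _ (ℱ t)
      · exact MeasurableSet.inter (ℱ.mono ht _ (hBmeas0 n))
          (by simpa only [WithTop.coe_le_coe] using hτkst k t)
    -- the constant-value identity for each k
    have hIDk : ∀ k, ∫ ω in B n, (P[M T | ((hτkst k).measurableSpace)]) ω ∂P
        = x * (P (B n)).toReal := by
      intro k
      have hle : (hτkst k).measurableSpace ≤ m := (hτkst k).measurableSpace_le
      rw [setIntegral_condExp hle (hM.integrable T) (hBG k)]
      have h0T : P[M T | ℱ 0] =ᵐ[P] M 0 := hM.condExp_ae_eq hT.le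
      have e1 : ∫ ω in B n, M T ω ∂P = ∫ ω in B n, (P[M T | ℱ 0]) ω ∂P :=
        (setIntegral_condExp (ℱ.le 0) (hM.integrable T) (hBmeas0 n)).symm
      have e2 : ∫ ω in B n, (P[M T | ℱ 0]) ω ∂P = ∫ ω in B n, M 0 ω ∂P :=
        setIntegral_congr_ae (hBmeas n) (h0T.mono fun ω hω _ => hω)
      have e3 : ∫ ω in B n, M 0 ω ∂P = ∫ ω in B n, (x : ℝ) ∂P := by
        refine setIntegral_congr_fun (hBmeas n) fun ω hω => ?_
        have : min 0 (π n ω) = 0 := min_eq_left hω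
        simp only [hMdef, stoppedProcess]
        rw [← WithTop.coe_min, this]
        exact hX0 ω
      rw [e1, e2, e3, setIntegral_const, smul_eq_mul, mul_comm]; rfl
    -- pass to the limit in k
    set Y' : ℕ → Ω → ℝ := fun k => P[M T | ((hτkst k).measurableSpace)] with hY'def
    set Y : Ω → ℝ := fun ω => X (min (τ ω) (π n ω)) ω with hYdef
    have hpt : ∀ ω, Tendsto (fun k => stoppedValue M (fun ω => (τk k ω : WithTop ℝ)) ω) atTop
        (𝓝 (Y ω)) := by
      intro ω
      have hc : Continuous fun r : ℝ => X (min r (π n ω)) ω :=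
        (hcont ω).comp (continuous_id.min continuous_const)
      have h2 := (hc.tendsto (τ ω)).comp (tendsto_disc hT (τ ω))
      exact h2.congr fun k => by
        simp only [Function.comp_apply, stoppedValue, hMdef, stoppedProcess]
        rw [← WithTop.coe_min]; rfl
    have haetend : ∀ᵐ ω ∂P, Tendsto (fun k => Y' k ω) atTop (𝓝 (Y ω)) := by
      have hall : ∀ᵐ ω ∂P, ∀ k, stoppedValue M (fun ω => (τk k ω : WithTop ℝ)) ω = Y' k ω :=
        ae_all_iff.2 fun k => hOS k
      filter_upwards [hall] with ω hω
      exact (hpt ω).congr fun k => hω k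
    have hY'meas : ∀ k, AEStronglyMeasurable (Y' k) P := fun k =>
      (stronglyMeasurable_condExp.mono ((hτkst k).measurableSpace_le)).aestronglyMeasurable
    have hYmeas : AEStronglyMeasurable Y P :=
      aestronglyMeasurable_of_tendsto_ae atTop hY'meas haetend
    have hUI : UniformIntegrable Y' 1 P :=
      (hM.integrable T).uniformIntegrable_condExp fun k => (hτkst k).measurableSpace_le
    have hYint : MemLp Y 1 P := by
      obtain ⟨C, hC⟩ := hUI.2.2
      refine ⟨hYmeas, ?_⟩
      have h1 : ∀ᵐ ω ∂P, (‖Y ω‖₊ : ℝ≥0∞) = Filter.liminf (fun k => (‖Y' k ω‖₊ : ℝ≥0∞)) atTop := by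
        filter_upwards [haetend] with ω hω
        exact (((ENNReal.continuous_coe.comp continuous_nnnorm).tendsto _).comp hω).liminf_eq.symm
      have h2 : eLpNorm Y 1 P = ∫⁻ ω, Filter.liminf (fun k => (‖Y' k ω‖₊ : ℝ≥0∞)) atTop ∂P := by
        rw [eLpNorm_one_eq_lintegral_enorm]
        exact lintegral_congr_ae h1
      rw [h2]
      refine lt_of_le_of_lt (lintegral_liminf_le' fun k => (hY'meas k).enorm) ?_
      refine lt_of_le_of_lt ?_ (ENNReal.coe_lt_top (r := C))
      refine Filter.liminf_le_of_le ?_ ?_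
      · exact ⟨0, Filter.eventually_map.2 (Eventually.of_forall fun k => zero_le)⟩
      · intro b hb
        obtain ⟨k, hk⟩ := hb.exists
        exact hk.trans ((eLpNorm_one_eq_lintegral_enorm (f := Y' k) (μ := P)).symm.le.trans (hC k))
    have hTIM : TendstoInMeasure P Y' atTop Y := tendstoInMeasure_of_tendsto_ae hY'meas haetend
    have hL1 : Tendsto (fun k => eLpNorm (Y' k - Y) 1 P) atTop (𝓝 0) :=
      tendsto_Lp_finite_of_tendstoInMeasure le_rfl ENNReal.one_ne_top hY'meas hYint hUI.2.1 hTIM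
    have hconv : Tendsto (fun k => ∫ ω in B n, Y' k ω ∂P) atTop (𝓝 (∫ ω in B n, Y ω ∂P)) := by
      refine tendsto_integral_of_L1 (μ := P.restrict (B n)) Y
        ((memLp_one_iff_integrable.1 hYint).restrict).aestronglyMeasurable ?_ ?_
      · exact Eventually.of_forall fun k => integrable_condExp.restrict
      · have hle : ∀ k, (∫⁻ ω, ‖Y' k ω - Y ω‖₊ ∂(P.restrict (B n)))
            ≤ eLpNorm (Y' k - Y) 1 P := by
          intro k
          have : (∫⁻ ω, ‖Y' k ω - Y ω‖₊ ∂(P.restrict (B n)))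
              = eLpNorm (Y' k - Y) 1 (P.restrict (B n)) := by
            rw [eLpNorm_one_eq_lintegral_enorm]
            rfl
          rw [this]
          exact eLpNorm_mono_measure _ Measure.restrict_le_self
        exact tendsto_of_tendsto_of_tendsto_of_le_of_le tendsto_const_nhds hL1
          (fun k => zero_le) hle
    have hconst : Tendsto (fun k => ∫ ω in B n, Y' k ω ∂P) atTop
        (𝓝 (x * (P (B n)).toReal)) :=
      tendsto_const_nhds.congr fun k => (hIDk k).symm
    exact tendsto_nhds_unique hconv hconst
  -- pass to the limit in n
  have hprog : IsStronglyProgressive ℱ X :=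
    (show StronglyAdapted ℱ X from fun i => (hadp i).stronglyMeasurable).isStronglyProgressive_of_continuous hcont
  have hYn : ∀ n, AEStronglyMeasurable (fun ω => X (min (τ ω) (π n ω)) ω) P := by
    intro n
    have hst : IsStoppingTime ℱ fun ω => ((min (τ ω) (π n ω) : ℝ) : WithTop ℝ) := by
      simpa only [WithTop.coe_min] using hτst.min (hπst n)
    have := measurable_stoppedValue hprog hst
    exact (this.mono hst.measurableSpace_le le_rfl).aestronglyMeasurable
  set g : ℕ → Ω → ℝ := fun n => (B n).indicator (fun ω => X (min (τ ω) (π n ω)) ω) with hgdef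
  have hgint_eq : ∀ n, ∫ ω, g n ω ∂P = x * (P (B n)).toReal := by
    intro n
    rw [hgdef, integral_indicator (hBmeas n)]
    exact IDENT2 n
  have hgmeas : ∀ n, AEStronglyMeasurable (g n) P := fun n => (hYn n).indicator (hBmeas n)
  have hgbound : ∀ n, ∀ᵐ ω ∂P, ‖g n ω‖ ≤ β := by
    intro n
    refine Eventually.of_forall fun ω => ?_
    simp only [hgdef]
    by_cases hω : ω ∈ B n
    · rw [indicator_of_mem hω]
      have h0 : 0 ≤ min (τ ω) (π n ω) := le_min (hτ0 ω) hω
      have hle : X (min (τ ω) (π n ω)) ω ≤ β := by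
        refine X_le_beta hcont ?_ h0 (min_le_left _ _)
        rw [hX0]; exact hxβ
      rw [Real.norm_eq_abs, abs_le]
      exact ⟨by linarith [hnonneg (min (τ ω) (π n ω)) ω, hx], hle⟩
    · rw [indicator_of_notMem hω, norm_zero]
      linarith
  have hglim : ∀ᵐ ω ∂P, Tendsto (fun n => g n ω) atTop (𝓝 (X (τ ω) ω)) := by
    filter_upwards [hπtend] with ω hω
    have hev : ∀ᶠ n in atTop, g n ω = X (τ ω) ω := by
      filter_upwards [hω.eventually_ge_atTop T] with n hn
      have hmem : ω ∈ B n := hT.le.trans hn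
      have hmin : min (τ ω) (π n ω) = τ ω := min_eq_left ((hτT ω).trans hn)
      simp only [hgdef, indicator_of_mem hmem, hmin]
    exact Tendsto.congr' (hev.mono fun n hn => hn.symm) tendsto_const_nhds
  have hDCT : Tendsto (fun n => ∫ ω, g n ω ∂P) atTop (𝓝 (∫ ω, X (τ ω) ω ∂P)) :=
    tendsto_integral_of_dominated_convergence (fun _ => β) hgmeas (integrable_const β)
      hgbound hglim
  have hmono : Monotone B := fun a b hab ω (hω : 0 ≤ π a ω) => hω.trans (hπmono ω hab)
  have hUnion : P (⋃ n, B n) = 1 := by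
    have hmem : ∀ᵐ ω ∂P, ω ∈ ⋃ n, B n := by
      filter_upwards [hπtend] with ω hω
      obtain ⟨n, hn⟩ := (hω.eventually_ge_atTop 0).exists
      exact mem_iUnion.2 ⟨n, hn⟩
    refine le_antisymm prob_le_one ?_
    calc (1:ℝ≥0∞) = P univ := (measure_univ).symm
    _ ≤ P (⋃ n, B n) := measure_mono_ae (hmem.mono fun ω hω _ => hω)
  have hPB : Tendsto (fun n => (P (B n)).toReal) atTop (𝓝 1) := by
    have h1 := tendsto_measure_iUnion_atTop (μ := P) hmono
    rw [hUnion] at h1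
    have h2 := (ENNReal.tendsto_toReal ENNReal.one_ne_top).comp h1
    simpa [ENNReal.toReal_one, Function.comp_def] using h2
  have hconst : Tendsto (fun n => ∫ ω, g n ω ∂P) atTop (𝓝 (x * 1)) :=
    Tendsto.congr (fun n => (hgint_eq n).symm) (hPB.const_mul x)
  rw [mul_one] at hconst
  exact tendsto_nhds_unique hDCT hconst

end core

/-- For a nonnegative continuous local martingale `X` on `[0,T]` with
`X_0 = x ≥ 0`, and `τ^β` the first hitting time of level `β` capped at `T`,
`lim_{β→∞} β·P(τ^β < T) = x - E[X_T]`; in particular the limit is at most `x`. -/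
theorem stmt0 {Ω : Type*} {m : MeasurableSpace Ω} (ℱ : Filtration ℝ m)
    (P : Measure Ω) [IsProbabilityMeasure P]
    (X : ℝ → Ω → ℝ) (x T : ℝ) (hx : 0 ≤ x) (hT : 0 < T)
    (hX0 : ∀ ω, X 0 ω = x)
    (hcont : ∀ ω, Continuous fun s => X s ω)
    (hnonneg : ∀ s ω, 0 ≤ X s ω)
    (hloc : IsLocMart ℱ X P)
    (hsup : Supermartingale X ℱ P) :
    Tendsto (fun β : ℝ => β * (P {ω | hittingBtwn X (Ici β) 0 T ω < T}).toReal)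
        atTop (𝓝 (x - ∫ ω, X T ω ∂P)) ∧
      x - ∫ ω, X T ω ∂P ≤ x := by
  have hXTint : Integrable (fun ω => X T ω) P := hsup.integrable T
  have hXTnn : (0:ℝ) ≤ ∫ ω, X T ω ∂P := integral_nonneg fun ω => hnonneg T ω
  obtain ⟨π, hπst, hπmono, hπtend, hπmart⟩ := hloc
  have hadp : Adapted ℱ X := hsup.stronglyAdapted.adapted
  refine ⟨?_, by linarith⟩
  have hID : ∀ β : ℝ, x < β →
      β * (P {ω | hittingBtwn X (Ici β) 0 T ω < T}).toReal
        = x - ∫ ω in {ω | hittingBtwn X (Ici β) 0 T ω < T}ᶜ, X T ω ∂P := by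
    intro β hβ
    have hτst : IsStoppingTime ℱ (fun ω => ((hittingBtwn X (Ici β) 0 T ω : ℝ) : WithTop ℝ)) :=
      hit_isStoppingTime hadp hcont hT
    have hSmeas : MeasurableSet {ω | hittingBtwn X (Ici β) 0 T ω < T} :=
      ℱ.le T _ (by simpa only [WithTop.coe_lt_coe] using hτst.measurableSet_lt T)
    have hkey := key_integral ℱ P X x T β hT hx hβ hX0 hcont hnonneg π hπst hπmono
      hπtend hπmart hadp
    have hsplit : (fun ω => X (hittingBtwn X (Ici β) 0 T ω) ω)
        = fun ω => ({ω | hittingBtwn X (Ici β) 0 T ω < T}.indicator (fun _ => β) ω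
            + ({ω | hittingBtwn X (Ici β) 0 T ω < T}ᶜ).indicator (fun ω => X T ω) ω) := by
      funext ω
      by_cases hω : ω ∈ {ω | hittingBtwn X (Ici β) 0 T ω < T}
      · rw [indicator_of_mem hω, indicator_of_notMem (notMem_compl_iff.2 hω), add_zero,
          X_at_hitting hcont (by rw [hX0]; exact hβ) hω]
      · rw [indicator_of_notMem hω, indicator_of_mem (mem_compl hω), zero_add,
          le_antisymm (hittingBtwn_le ω) (not_lt.1 hω)]
    rw [hsplit] at hkey
    rw [integral_add ((integrable_const β).indicator hSmeas) (hXTint.indicator hSmeas.compl),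
      integral_indicator hSmeas, setIntegral_const, integral_indicator hSmeas.compl,
      smul_eq_mul] at hkey
    rw [show P.real {ω | hittingBtwn X (Ici β) 0 T ω < T}
      = (P {ω | hittingBtwn X (Ici β) 0 T ω < T}).toReal from rfl] at hkey
    rw [← hkey]
    ring
  have hItend : Tendsto (fun β : ℝ =>
      ∫ ω in {ω | hittingBtwn X (Ici β) 0 T ω < T}ᶜ, X T ω ∂P) atTop (𝓝 (∫ ω, X T ω ∂P)) := by
    have hmeasS : ∀ β : ℝ, MeasurableSet {ω | hittingBtwn X (Ici β) 0 T ω < T} := fun β =>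
      ℱ.le T _ (by simpa only [WithTop.coe_lt_coe] using
        (hit_isStoppingTime hadp hcont hT).measurableSet_lt T)
    have heq : ∀ β : ℝ, ∫ ω in {ω | hittingBtwn X (Ici β) 0 T ω < T}ᶜ, X T ω ∂P
        = ∫ ω, ({ω | hittingBtwn X (Ici β) 0 T ω < T}ᶜ).indicator (fun ω => X T ω) ω ∂P :=
      fun β => (integral_indicator (hmeasS β).compl).symm
    simp only [heq]
    refine tendsto_integral_filter_of_dominated_convergence (fun ω => |X T ω|) ?_ ?_
      hXTint.abs ?_
    · exact Eventually.of_forall fun β =>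
        hXTint.aestronglyMeasurable.indicator (hmeasS β).compl
    · refine Eventually.of_forall fun β => Eventually.of_forall fun ω => ?_
      calc ‖({ω | hittingBtwn X (Ici β) 0 T ω < T}ᶜ).indicator (fun ω => X T ω) ω‖
          ≤ ‖X T ω‖ := norm_indicator_le_norm_self _ _
      _ = |X T ω| := Real.norm_eq_abs _
    · refine Eventually.of_forall fun ω => ?_
      have hev : ∀ᶠ β : ℝ in atTop,
          ({ω | hittingBtwn X (Ici β) 0 T ω < T}ᶜ).indicator (fun ω => X T ω) ω = X T ω := by
        filter_upwards [eventually_no_hit hcont hT ω] with β hβeq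
        have : ω ∈ {ω | hittingBtwn X (Ici β) 0 T ω < T}ᶜ := by
          simp only [mem_compl_iff, mem_setOf_eq, hβeq]
          exact lt_irrefl T
        rw [indicator_of_mem this]
      exact Tendsto.congr' (hev.mono fun β hβ => hβ.symm) tendsto_const_nhds
  have h1 : Tendsto (fun β : ℝ =>
      x - ∫ ω in {ω | hittingBtwn X (Ici β) 0 T ω < T}ᶜ, X T ω ∂P) atTop
      (𝓝 (x - ∫ ω, X T ω ∂P)) := tendsto_const_nhds.sub hItend
  exact h1.congr' ((eventually_gt_atTop x).mono fun β hβ => (hID β hβ).symm)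
end

section
/- Let σ : (0,∞) → (0,∞) and define v(x) := ∫_{1/2}^x (x−y)·2/(σ(y/(1−y))²·(1−y)^4) dy for x ∈ (1/2, 1]. Then ∫_1^∞ x/σ(x)^2 dx ≤ (1/2)·v(1) ≤ 2·∫_1^∞ x/σ(x)^2 dx, where v(1) is interpreted as an extended real. In particular v(1) = ∞ if and only if ∫_1^∞ x/σ(x)^2 dx = ∞. -/
open MeasureTheory Set
open scoped ENNReal

lemma stmt5_img : (fun y : ℝ => y / (1 - y)) '' Ioo (1/2 : ℝ) 1 = Ioi 1 := by
  ext x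
  constructor
  · rintro ⟨y, ⟨h1, h2⟩, rfl⟩
    have hy : 0 < 1 - y := by linarith
    rw [mem_Ioi, lt_div_iff₀ hy]
    linarith
  · intro hx
    rw [mem_Ioi] at hx
    have hx0 : (0:ℝ) < 1 + x := by linarith
    refine ⟨x / (1 + x), ⟨?_, ?_⟩, ?_⟩
    · rw [div_lt_div_iff₀ (by norm_num) hx0]; linarith
    · rw [div_lt_one hx0]; linarith
    · field_simp; ring

lemma stmt5_inj : InjOn (fun y : ℝ => y / (1 - y)) (Ioo (1/2 : ℝ) 1) := by
  intro a ha b hb hab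
  have ha' : (1:ℝ) - a ≠ 0 := by have := ha.2; intro h; linarith
  have hb' : (1:ℝ) - b ≠ 0 := by have := hb.2; intro h; linarith
  field_simp at hab
  linarith

/-- Comparison between the Feller test quantity
`v(1) = ∫_{1/2}^1 (1-y)·2/(σ(y/(1-y))²(1-y)⁴) dy` and `∫_1^∞ x/σ(x)² dx`
(as extended reals): `∫ ≤ v(1)/2 ≤ 2∫`; in particular `v(1) = ∞ ↔ ∫ = ∞`. -/
theorem stmt5 (σ : ℝ → ℝ) (hσ : ∀ x > (0:ℝ), 0 < σ x) (hmeas : Measurable σ) :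
    (∫⁻ x in Ioi (1:ℝ), ENNReal.ofReal (x / σ x ^ 2)) ≤
      (1/2) * ∫⁻ y in Ioo (1/2 : ℝ) 1,
        ENNReal.ofReal ((1 - y) * 2 / (σ (y / (1 - y)) ^ 2 * (1 - y) ^ 4)) ∧
    (1/2) * (∫⁻ y in Ioo (1/2 : ℝ) 1,
        ENNReal.ofReal ((1 - y) * 2 / (σ (y / (1 - y)) ^ 2 * (1 - y) ^ 4))) ≤
      2 * ∫⁻ x in Ioi (1:ℝ), ENNReal.ofReal (x / σ x ^ 2) ∧
    ((∫⁻ y in Ioo (1/2 : ℝ) 1,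
        ENNReal.ofReal ((1 - y) * 2 / (σ (y / (1 - y)) ^ 2 * (1 - y) ^ 4))) = ⊤ ↔
      (∫⁻ x in Ioi (1:ℝ), ENNReal.ofReal (x / σ x ^ 2)) = ⊤) := by
  set A : ℝ≥0∞ := ∫⁻ x in Ioi (1:ℝ), ENNReal.ofReal (x / σ x ^ 2) with hA
  set B : ℝ≥0∞ := ∫⁻ x in Ioi (1:ℝ), ENNReal.ofReal ((1 + x) / σ x ^ 2) with hB
  -- Change of variables: the y-integral equals 2 * B
  have hderiv : ∀ y ∈ Ioo (1/2 : ℝ) 1,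
      HasFDerivWithinAt (fun y : ℝ => y / (1 - y))
        (ContinuousLinearMap.smulRight (1 : ℝ →L[ℝ] ℝ) ((1 - y)⁻¹ ^ 2)) (Ioo (1/2 : ℝ) 1) y := by
    intro y hy
    have hy' : (1:ℝ) - y ≠ 0 := by have := hy.2; intro h; linarith
    rw [hasFDerivWithinAt_iff_hasDerivWithinAt]
    have h1 : HasDerivWithinAt (fun y : ℝ => y) 1 (Ioo (1/2 : ℝ) 1) y :=
      (hasDerivAt_id y).hasDerivWithinAt
    have h2 : HasDerivWithinAt (fun y : ℝ => 1 - y) (-1) (Ioo (1/2 : ℝ) 1) y := by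
      simpa using ((hasDerivAt_id y).const_sub 1).hasDerivWithinAt
    have := h1.div h2 hy'
    refine this.congr_deriv ?_
    simp
  have hcov : (∫⁻ y in Ioo (1/2 : ℝ) 1,
      ENNReal.ofReal ((1 - y) * 2 / (σ (y / (1 - y)) ^ 2 * (1 - y) ^ 4))) = 2 * B := by
    have himg := stmt5_img
    have key := lintegral_image_eq_lintegral_abs_det_fderiv_mul (μ := volume)
      measurableSet_Ioo hderiv stmt5_inj
      (fun x => ENNReal.ofReal ((1 + x) / σ x ^ 2))
    rw [himg] at key
    rw [hB, key]
    rw [← lintegral_const_mul' 2 _ (by norm_num)]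
    refine setLIntegral_congr_fun measurableSet_Ioo ?_
    intro y hy
    have hy1 : (0:ℝ) < 1 - y := by have := hy.2; linarith
    have hy0 : (0:ℝ) < y := by have := hy.1; linarith
    have hx : (0:ℝ) < y / (1 - y) := div_pos hy0 hy1
    have hσx : 0 < σ (y / (1 - y)) := hσ _ hx
    dsimp only
    rw [ContinuousLinearMap.det_smulRight, ContinuousLinearMap.one_apply, one_mul]
    rw [← ENNReal.ofReal_ofNat, ← ENNReal.ofReal_mul (by positivity), ← ENNReal.ofReal_mul (by norm_num)]
    congr 1
    have h1y : (1:ℝ) + y / (1 - y) = (1 - y)⁻¹ := by field_simp; ring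
    rw [h1y, abs_of_pos (by positivity : (0:ℝ) < (1 - y)⁻¹ ^ 2)]
    field_simp
  -- pointwise comparisons: A ≤ B ≤ 2 * A
  have hAB : A ≤ B := by
    refine lintegral_mono_ae ?_
    filter_upwards [ae_restrict_mem measurableSet_Ioi] with x hx
    have hσx : 0 < σ x := hσ x (by linarith [hx.out])
    exact ENNReal.ofReal_le_ofReal
      (div_le_div_of_nonneg_right (by linarith) (by positivity))
  have hB2A : B ≤ 2 * A := by
    rw [hA, ← lintegral_const_mul' 2 _ (by norm_num)]
    refine lintegral_mono_ae ?_
    filter_upwards [ae_restrict_mem measurableSet_Ioi] with x hx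
    have hx1 : (1:ℝ) < x := hx
    have hσx : 0 < σ x := hσ x (by linarith)
    rw [← ENNReal.ofReal_ofNat, ← ENNReal.ofReal_mul (by norm_num)]
    refine ENNReal.ofReal_le_ofReal ?_
    rw [← mul_div_assoc]
    refine div_le_div_of_nonneg_right ?_ (by positivity)
    show (1:ℝ) + x ≤ 2 * x
    linarith
  have hhalf : (1/2 : ℝ≥0∞) * (2 * B) = B := by
    rw [← mul_assoc, one_div, ENNReal.inv_mul_cancel (by norm_num) (by norm_num), one_mul]
  rw [hcov, hhalf]
  refine ⟨hAB, hB2A, ?_⟩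
  constructor
  · intro h
    have hBtop : B = ⊤ := by
      rcases ENNReal.mul_eq_top.mp h with ⟨_, h2⟩ | ⟨h1, _⟩
      · exact h2
      · norm_num at h1
    by_contra hAtop
    have : B ≤ 2 * A := hB2A
    rw [hBtop] at this
    exact hAtop (by
      have h2A : 2 * A = ⊤ := top_le_iff.mp this
      rcases ENNReal.mul_eq_top.mp h2A with ⟨_, h2⟩ | ⟨h1, _⟩
      · exact h2
      · norm_num at h1)
  · intro h
    have : B = ⊤ := top_le_iff.mp (h ▸ hAB)
    rw [this, ENNReal.mul_top (by norm_num)]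
end

section
/- Let σ be continuous on (0,∞) with ∫_1^∞ x/σ(x)² dx = ∞ and 1/σ² locally integrable. Let u, v : [0,T] × [0,∞) → ℝ be C^{1,2} on [0,T) × (0,∞) with |u(t,x)| ≤ K(1+x) and |v(t,x)| ≤ K(1+x), such that −∂_t u − (1/2)σ(x)²∂_{xx}u ≤ 0 and −∂_t v − (1/2)σ(x)²∂_{xx}v ≥ 0 on [0,T) × (0,∞). If u(T,x) ≤ v(T,x) for all x > 0 and u(t,0) ≤ v(t,0) for all t ∈ [0,T], then u ≤ v on [0,T] × [0,∞). -/
open MeasureTheory Set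
open Filter Topology
open scoped ENNReal

lemma deriv_nonpos_of_max_right {F : ℝ → ℝ} {a b d : ℝ} (hab : a < b)
    (h : ∀ t ∈ Ioo a b, F t ≤ F a) (hd : HasDerivAt F d a) : d ≤ 0 := by
  have hs := hasDerivAt_iff_tendsto_slope.mp hd
  have hs' : Tendsto (slope F a) (𝓝[>] a) (𝓝 d) :=
    hs.mono_left (nhdsWithin_mono _ (fun x hx => ne_of_gt hx))
  refine le_of_tendsto hs' ?_
  filter_upwards [Ioo_mem_nhdsGT_of_mem ⟨le_refl a, hab⟩] with t ht
  have h1 : F t - F a ≤ 0 := sub_nonpos.mpr (h t ht)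
  have h2 : 0 < t - a := sub_pos.mpr ht.1
  rw [slope_def_field]
  exact div_nonpos_of_nonpos_of_nonneg h1 h2.le

/-- Second derivative test at a local max. -/
lemma second_deriv_nonpos_of_localmax {G φ : ℝ → ℝ} {x₀ c : ℝ}
    (hG : ∀ᶠ x in 𝓝 x₀, HasDerivAt G (φ x) x)
    (hφ : HasDerivAt φ c x₀) (hmax : IsLocalMax G x₀) : c ≤ 0 := by
  by_contra hc
  push_neg at hc
  have hφ0 : φ x₀ = 0 := IsLocalMax.hasDerivAt_eq_zero hmax hG.self_of_nhds
  have hs := hasDerivAt_iff_tendsto_slope.mp hφ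
  have hs' : Tendsto (slope φ x₀) (𝓝[>] x₀) (𝓝 c) :=
    hs.mono_left (nhdsWithin_mono _ (fun x hx => ne_of_gt hx))
  have hev : ∀ᶠ x in 𝓝[>] x₀, 0 < φ x := by
    filter_upwards [hs'.eventually (eventually_gt_nhds hc),
      self_mem_nhdsWithin] with x hx hx'
    have hq : 0 < (φ x - φ x₀) / (x - x₀) := by
      rw [slope_def_field] at hx; exact hx
    have h2 : 0 < x - x₀ := sub_pos.mpr hx'
    rcases div_pos_iff.mp hq with ⟨h3, _⟩ | ⟨_, h4⟩
    · linarith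
    · linarith
  have hGm : ∀ᶠ x in 𝓝[>] x₀, HasDerivAt G (φ x) x ∧ G x ≤ G x₀ :=
    nhdsWithin_le_nhds (hG.and hmax)
  obtain ⟨s, hsmem, hssub⟩ := (hev.and hGm).exists_mem
  obtain ⟨b, hb, hIoo⟩ := mem_nhdsGT_iff_exists_Ioo_subset.mp hsmem
  obtain ⟨m, hm1, hm2⟩ := exists_between hb.out
  have hmono : StrictMonoOn G (Icc x₀ m) := by
    apply strictMonoOn_of_deriv_pos (convex_Icc _ _)
    · intro x hx
      rcases eq_or_lt_of_le hx.1 with h | h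
      · exact h ▸ hG.self_of_nhds.continuousAt.continuousWithinAt
      · exact ((hssub _ (hIoo ⟨h, lt_of_le_of_lt hx.2 hm2⟩)).2.1).continuousAt.continuousWithinAt
    · intro x hx
      rw [interior_Icc] at hx
      have hx' : x ∈ Ioo x₀ b := ⟨hx.1, lt_trans hx.2 hm2⟩
      have h3 := hssub _ (hIoo hx')
      rw [h3.2.1.deriv]
      exact h3.1
  have h4 : G x₀ < G m :=
    hmono (left_mem_Icc.mpr (le_of_lt hm1)) (right_mem_Icc.mpr (le_of_lt hm1)) hm1
  have hle : G m ≤ G x₀ := (hssub _ (hIoo ⟨hm1, hm2⟩)).2.2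
  linarith

noncomputable def mfun (σ : ℝ → ℝ) (z : ℝ) : ℝ := 2 / σ z ^ 2 * min z ((z - 1) ^ 2)
noncomputable def Gone (σ : ℝ → ℝ) (x : ℝ) : ℝ := ∫ z in (1:ℝ)..x, mfun σ z
noncomputable def gfun (σ : ℝ → ℝ) (x : ℝ) : ℝ := 1 + x + ∫ y in (1:ℝ)..x, Gone σ y

variable {σ : ℝ → ℝ}

lemma mfun_contOn (hσc : ContinuousOn σ (Ioi 0)) (hσpos : ∀ x > (0:ℝ), 0 < σ x) :
    ContinuousOn (mfun σ) (Ioi 0) := by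
  apply ContinuousOn.mul
  · exact continuousOn_const.div (hσc.pow 2) (fun x hx => pow_ne_zero 2 (hσpos x hx).ne')
  · exact (continuous_id.min (by continuity)).continuousOn

lemma mfun_nonneg (hσpos : ∀ x > (0:ℝ), 0 < σ x) {z : ℝ} (hz : 0 < z) : 0 ≤ mfun σ z := by
  have h1 : 0 < σ z := hσpos z hz
  have h2 : (0:ℝ) ≤ min z ((z - 1) ^ 2) := le_min hz.le (sq_nonneg _)
  have : (0:ℝ) ≤ 2 / σ z ^ 2 := by positivity
  exact mul_nonneg this h2

lemma mfun_intble (hσc : ContinuousOn σ (Ioi 0)) (hσpos : ∀ x > (0:ℝ), 0 < σ x)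
    {a b : ℝ} (ha : 0 < a) (hb : 0 < b) :
    IntervalIntegrable (mfun σ) volume a b := by
  apply ContinuousOn.intervalIntegrable
  apply (mfun_contOn hσc hσpos).mono
  intro x hx
  rcases le_total a b with h | h
  · rw [uIcc_of_le h] at hx; exact lt_of_lt_of_le ha hx.1
  · rw [uIcc_of_ge h] at hx; exact lt_of_lt_of_le hb hx.1

lemma Gone_hasDeriv (hσc : ContinuousOn σ (Ioi 0)) (hσpos : ∀ x > (0:ℝ), 0 < σ x)
    {x : ℝ} (hx : 0 < x) : HasDerivAt (Gone σ) (mfun σ x) x := by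
  apply intervalIntegral.integral_hasDerivAt_right (mfun_intble hσc hσpos one_pos hx)
  · exact ((mfun_contOn hσc hσpos).stronglyMeasurableAtFilter isOpen_Ioi) x hx
  · exact (mfun_contOn hσc hσpos).continuousAt (isOpen_Ioi.mem_nhds hx)

lemma Gone_contOn (hσc : ContinuousOn σ (Ioi 0)) (hσpos : ∀ x > (0:ℝ), 0 < σ x) :
    ContinuousOn (Gone σ) (Ioi 0) := fun x hx =>
  ((Gone_hasDeriv hσc hσpos hx).continuousAt).continuousWithinAt

lemma Gone_intble (hσc : ContinuousOn σ (Ioi 0)) (hσpos : ∀ x > (0:ℝ), 0 < σ x)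
    {a b : ℝ} (ha : 0 < a) (hb : 0 < b) :
    IntervalIntegrable (Gone σ) volume a b := by
  apply ContinuousOn.intervalIntegrable
  apply (Gone_contOn hσc hσpos).mono
  intro x hx
  rcases le_total a b with h | h
  · rw [uIcc_of_le h] at hx; exact lt_of_lt_of_le ha hx.1
  · rw [uIcc_of_ge h] at hx; exact lt_of_lt_of_le hb hx.1

lemma Gone_nonneg (hσpos : ∀ x > (0:ℝ), 0 < σ x) {x : ℝ} (hx : 1 ≤ x) : 0 ≤ Gone σ x := by
  apply intervalIntegral.integral_nonneg hx
  intro z hz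
  exact mfun_nonneg hσpos (lt_of_lt_of_le one_pos hz.1)

lemma Gone_mono (hσc : ContinuousOn σ (Ioi 0)) (hσpos : ∀ x > (0:ℝ), 0 < σ x)
    {a b : ℝ} (ha : 0 < a) (hab : a ≤ b) : Gone σ a ≤ Gone σ b := by
  have h1 := mfun_intble hσc hσpos (a := 1) (b := a) one_pos ha
  have h2 := mfun_intble hσc hσpos (a := a) (b := b) ha (lt_of_lt_of_le ha hab)
  have key : Gone σ b = Gone σ a + ∫ z in a..b, mfun σ z := by
    rw [Gone, Gone, intervalIntegral.integral_add_adjacent_intervals h1 h2]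
  rw [key]
  have : 0 ≤ ∫ z in a..b, mfun σ z :=
    intervalIntegral.integral_nonneg hab fun z hz =>
      mfun_nonneg hσpos (lt_of_lt_of_le ha hz.1)
  linarith

lemma gfun_hasDeriv (hσc : ContinuousOn σ (Ioi 0)) (hσpos : ∀ x > (0:ℝ), 0 < σ x)
    {x : ℝ} (hx : 0 < x) :
    HasDerivAt (gfun σ) (1 + Gone σ x) x := by
  have h1 : HasDerivAt (fun y : ℝ => 1 + y) 1 x := (hasDerivAt_id x).const_add 1
  have h2 : HasDerivAt (fun y => ∫ z in (1:ℝ)..y, Gone σ z) (Gone σ x) x := by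
    apply intervalIntegral.integral_hasDerivAt_right (Gone_intble hσc hσpos one_pos hx)
    · exact ((Gone_contOn hσc hσpos).stronglyMeasurableAtFilter isOpen_Ioi) x hx
    · exact (Gone_contOn hσc hσpos).continuousAt (isOpen_Ioi.mem_nhds hx)
  exact h1.add h2

lemma gfun_ge (hσc : ContinuousOn σ (Ioi 0)) (hσpos : ∀ x > (0:ℝ), 0 < σ x)
    {x : ℝ} (hx : 0 < x) : 1 + x ≤ gfun σ x := by
  rw [gfun]
  rcases le_total 1 x with h | h
  · have : 0 ≤ ∫ y in (1:ℝ)..x, Gone σ y :=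
      intervalIntegral.integral_nonneg h fun y hy => Gone_nonneg hσpos hy.1
    linarith
  · have h2 : (∫ y in (1:ℝ)..x, Gone σ y) = -∫ y in x..(1:ℝ), Gone σ y := by
      rw [intervalIntegral.integral_symm x 1]
    have h3 : (∫ y in x..(1:ℝ), Gone σ y) ≤ 0 := by
      have h4 : 0 ≤ ∫ y in x..(1:ℝ), -Gone σ y := by
        apply intervalIntegral.integral_nonneg h
        intro y hy
        rw [Gone, intervalIntegral.integral_symm y 1, neg_neg]
        apply intervalIntegral.integral_nonneg hy.2
        intro z hz
        exact mfun_nonneg hσpos (lt_of_lt_of_le (lt_of_lt_of_le hx hy.1) hz.1)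
      rw [intervalIntegral.integral_neg] at h4
      linarith
    linarith

lemma gfun_key (hσc : ContinuousOn σ (Ioi 0)) (hσpos : ∀ x > (0:ℝ), 0 < σ x)
    {x : ℝ} (hx : 0 < x) : (1/2) * σ x ^ 2 * mfun σ x ≤ gfun σ x := by
  have h1 : σ x ≠ 0 := (hσpos x hx).ne'
  have h2 : (1/2) * σ x ^ 2 * mfun σ x = min x ((x - 1) ^ 2) := by
    rw [mfun]; field_simp
  rw [h2]
  calc min x ((x-1)^2) ≤ x := min_le_left _ _
    _ ≤ 1 + x := by linarith
    _ ≤ gfun σ x := gfun_ge hσc hσpos hx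

-- union decomposition of Ioi 3
lemma Ioi3_eq_iUnion : Ioi (3:ℝ) = ⋃ n : ℕ, Ioc (3 + (n:ℝ)) (3 + n + 1) := by
  ext x
  simp only [mem_Ioi, mem_iUnion, mem_Ioc]
  constructor
  · intro hx
    set y := x - 3 with hy
    have hy0 : 0 < y := by simp [hy]; linarith
    have hc1 : 1 ≤ ⌈y⌉₊ := Nat.one_le_iff_ne_zero.mpr (Nat.ceil_pos.mpr hy0).ne'
    refine ⟨⌈y⌉₊ - 1, ?_, ?_⟩
    · have h := Nat.ceil_lt_add_one hy0.le
      have hcast : ((⌈y⌉₊ - 1 : ℕ) : ℝ) = (⌈y⌉₊ : ℝ) - 1 := by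
        push_cast [Nat.cast_sub hc1]; ring
      rw [hcast]; linarith
    · have h := Nat.le_ceil y
      have hcast : ((⌈y⌉₊ - 1 : ℕ) : ℝ) = (⌈y⌉₊ : ℝ) - 1 := by
        push_cast [Nat.cast_sub hc1]; ring
      rw [hcast]; linarith
  · rintro ⟨n, h1, _⟩
    have : (0:ℝ) ≤ n := n.cast_nonneg
    linarith

lemma Ioc_succ_pairwise : Pairwise (Function.onFun Disjoint fun n : ℕ => Ioc (3 + (n:ℝ)) (3 + n + 1)) := by
  intro m n hmn
  simp only [Function.onFun]
  rw [Set.Ioc_disjoint_Ioc]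
  rcases lt_or_gt_of_ne hmn with h | h
  · have : (m:ℝ) + 1 ≤ n := by exact_mod_cast h
    calc min (3 + (m:ℝ) + 1) (3 + n + 1) ≤ 3 + (m:ℝ) + 1 := min_le_left _ _
      _ ≤ 3 + (n:ℝ) := by linarith
      _ ≤ max (3 + (m:ℝ)) (3 + n) := le_max_right _ _
  · have : (n:ℝ) + 1 ≤ m := by exact_mod_cast h
    calc min (3 + (m:ℝ) + 1) (3 + n + 1) ≤ 3 + (n:ℝ) + 1 := min_le_right _ _
      _ ≤ 3 + (m:ℝ) := by linarith
      _ ≤ max (3 + (m:ℝ)) (3 + n) := le_max_left _ _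

lemma Gone_unbounded (hσc : ContinuousOn σ (Ioi 0)) (hσpos : ∀ x > (0:ℝ), 0 < σ x)
    (hdiv : ∫⁻ x in Ioi (1:ℝ), ENNReal.ofReal (x / σ x ^ 2) = ⊤) :
    ∀ C : ℝ, ∃ X, 3 ≤ X ∧ C ≤ Gone σ X := by
  intro C
  by_contra hcon
  push_neg at hcon
  set f : ℝ → ℝ≥0∞ := fun z => ENNReal.ofReal (z / σ z ^ 2) with hf
  have hq : ∀ a b : ℝ, 0 < a → ContinuousOn (fun z => z / σ z ^ 2) (Icc a b) := by
    intro a b ha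
    apply ContinuousOn.div continuousOn_id
    · exact (hσc.mono (fun z hz => lt_of_lt_of_le ha hz.1)).pow 2
    · intro z hz
      exact pow_ne_zero 2 (hσpos z (lt_of_lt_of_le ha hz.1)).ne'
  -- Step 1: finite on Ioc 1 3
  have fin1 : ∫⁻ z in Ioc (1:ℝ) 3, f z ≠ ⊤ := by
    obtain ⟨z₀, _, hz₀⟩ := isCompact_Icc.exists_isMaxOn
      (⟨1, by norm_num⟩ : (Icc (1:ℝ) 3).Nonempty) (hq 1 3 one_pos)
    set M := z₀ / σ z₀ ^ 2
    have hb : ∫⁻ z in Ioc (1:ℝ) 3, f z ≤ ENNReal.ofReal M * volume (Ioc (1:ℝ) 3) := by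
      rw [← setLIntegral_const]
      apply lintegral_mono_ae
      rw [ae_restrict_iff' measurableSet_Ioc]
      apply ae_of_all
      intro z hz
      exact ENNReal.ofReal_le_ofReal (hz₀ ⟨hz.1.le, hz.2⟩)
    refine ne_top_of_le_ne_top ?_ hb
    exact ENNReal.mul_ne_top ENNReal.ofReal_ne_top (by simp)
  -- Step 2: infinite on Ioi 3
  have h2 : ∫⁻ z in Ioi (3:ℝ), f z = ⊤ := by
    have hu := lintegral_union (f := f) (μ := volume) (A := Ioc (1:ℝ) 3)
      (B := Ioi (3:ℝ)) measurableSet_Ioi (Set.Ioc_disjoint_Ioi (le_refl (3:ℝ)))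
    rw [Ioc_union_Ioi_eq_Ioi (by norm_num : (1:ℝ) ≤ 3)] at hu
    rw [hu] at hdiv
    rcases ENNReal.add_eq_top.mp hdiv with h | h
    · exact absurd h fin1
    · exact h
  -- Step 3: uniform bound on Ioc 3 X
  have key : ∀ X : ℝ, 3 ≤ X → ∫⁻ z in Ioc (3:ℝ) X, f z ≤ ENNReal.ofReal (C / 2) := by
    intro X hX
    have hint : IntegrableOn (fun z => z / σ z ^ 2) (Ioc 3 X) :=
      ((hq 3 X (by norm_num)).integrableOn_Icc).mono_set Ioc_subset_Icc_self
    have hnn : 0 ≤ᵐ[volume.restrict (Ioc (3:ℝ) X)] fun z => z / σ z ^ 2 := by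
      filter_upwards [ae_restrict_mem measurableSet_Ioc] with z hz
      have : (0:ℝ) < z := lt_trans (by norm_num) hz.1
      positivity
    rw [hf]
    rw [← ofReal_integral_eq_lintegral_ofReal hint hnn]
    apply ENNReal.ofReal_le_ofReal
    have heq : ∫ z in Ioc (3:ℝ) X, z / σ z ^ 2 = ∫ z in (3:ℝ)..X, z / σ z ^ 2 :=
      (intervalIntegral.integral_of_le hX).symm
    rw [heq]
    -- relate with Gone
    have hcongr : (∫ z in (3:ℝ)..X, mfun σ z) = ∫ z in (3:ℝ)..X, 2 * (z / σ z ^ 2) := by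
      apply intervalIntegral.integral_congr
      intro z hz
      rw [uIcc_of_le hX] at hz
      have hz3 : (3:ℝ) ≤ z := hz.1
      have hmin : min z ((z - 1) ^ 2) = z := min_eq_left (by nlinarith)
      rw [mfun, hmin]
      ring
    have h5 : (∫ z in (3:ℝ)..X, 2 * (z / σ z ^ 2)) = 2 * ∫ z in (3:ℝ)..X, z / σ z ^ 2 :=
      intervalIntegral.integral_const_mul 2 _
    have h6 : (∫ z in (3:ℝ)..X, mfun σ z) ≤ Gone σ X := by
      have i1 := mfun_intble hσc hσpos (a := 1) (b := 3) one_pos (by norm_num)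
      have i2 := mfun_intble hσc hσpos (a := 3) (b := X) (by norm_num) (by linarith)
      have hadd : Gone σ X = (∫ z in (1:ℝ)..3, mfun σ z) + ∫ z in (3:ℝ)..X, mfun σ z := by
        rw [Gone, intervalIntegral.integral_add_adjacent_intervals i1 i2]
      have hpos : 0 ≤ ∫ z in (1:ℝ)..3, mfun σ z :=
        intervalIntegral.integral_nonneg (by norm_num)
          (fun z hz => mfun_nonneg hσpos (lt_of_lt_of_le one_pos hz.1))
      linarith [hadd]
    have h7 : Gone σ X < C := hcon X hX
    rw [hcongr, h5] at h6
    linarith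
  -- Step 4: contradiction
  rw [Ioi3_eq_iUnion, lintegral_iUnion (fun n => measurableSet_Ioc) Ioc_succ_pairwise] at h2
  have hps : ∀ n : ℕ,
      (∑ i ∈ Finset.range n, ∫⁻ z in Ioc (3 + (i:ℝ)) (3 + i + 1), f z) ≤
        ENNReal.ofReal (C / 2) := by
    intro n
    rw [← lintegral_biUnion_finset
      (fun i _ j _ hij => Ioc_succ_pairwise hij) (fun i _ => measurableSet_Ioc) f]
    refine le_trans (lintegral_mono_set ?_) (key (3 + n) (by
      have : (0:ℝ) ≤ n := n.cast_nonneg; linarith))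
    intro x hx
    simp only [mem_iUnion, Finset.mem_coe, Finset.mem_range] at hx
    obtain ⟨i, hi, hx⟩ := hx
    have hi' : (i:ℝ) + 1 ≤ n := by exact_mod_cast hi
    have : (0:ℝ) ≤ i := i.cast_nonneg
    exact ⟨by linarith [hx.1], by linarith [hx.2]⟩
  rw [ENNReal.tsum_eq_iSup_nat] at h2
  have hle : (⊤ : ℝ≥0∞) ≤ ENNReal.ofReal (C / 2) := h2 ▸ iSup_le hps
  exact ENNReal.ofReal_ne_top ((le_antisymm hle le_top).symm)

lemma gfun_superlinear (hσc : ContinuousOn σ (Ioi 0)) (hσpos : ∀ x > (0:ℝ), 0 < σ x)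
    (hdiv : ∫⁻ x in Ioi (1:ℝ), ENNReal.ofReal (x / σ x ^ 2) = ⊤) :
    ∀ C : ℝ, 0 < C → ∃ R : ℝ, 1 ≤ R ∧ ∀ x, R ≤ x → C * (1 + x) ≤ gfun σ x := by
  intro C hC
  obtain ⟨X, hX3, hGX⟩ := Gone_unbounded hσc hσpos hdiv (2 * C)
  refine ⟨2 * X + C, by linarith, ?_⟩
  intro x hx
  have hX0 : (0:ℝ) < X := by linarith
  have hx0 : (0:ℝ) < x := by linarith
  have hXx : X ≤ x := by linarith
  have i1 := Gone_intble hσc hσpos (a := 1) (b := X) one_pos hX0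
  have i2 := Gone_intble hσc hσpos (a := X) (b := x) hX0 hx0
  have hsplit : gfun σ x = 1 + x + ((∫ y in (1:ℝ)..X, Gone σ y) + ∫ y in X..x, Gone σ y) := by
    rw [gfun, intervalIntegral.integral_add_adjacent_intervals i1 i2]
  have hp1 : 0 ≤ ∫ y in (1:ℝ)..X, Gone σ y :=
    intervalIntegral.integral_nonneg (by linarith) (fun y hy => Gone_nonneg hσpos hy.1)
  have hp2 : (x - X) * (2 * C) ≤ ∫ y in X..x, Gone σ y := by
    have hconst : (∫ _ in X..x, (2*C : ℝ)) = (x - X) * (2*C) := by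
      rw [intervalIntegral.integral_const, smul_eq_mul]
    rw [← hconst]
    apply intervalIntegral.integral_mono_on hXx (intervalIntegrable_const) i2
    intro y hy
    exact le_trans hGX (Gone_mono hσc hσpos hX0 hy.1)
  rw [hsplit]
  nlinarith [sq_nonneg C, hp1, hp2]

lemma gfun_contOn {σ : ℝ → ℝ} (hσc : ContinuousOn σ (Ioi 0)) (hσpos : ∀ x > (0:ℝ), 0 < σ x) :
    ContinuousOn (gfun σ) (Ioi 0) := fun x hx =>
  (gfun_hasDeriv hσc hσpos hx).continuousAt.continuousWithinAt

/-- Comparison theorem without linear growth of `σ`. Let `σ` be continuous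
and positive on `(0,∞)` with `∫_1^∞ x/σ(x)² dx = ∞` and `1/σ²` locally integrable.
If `u` (resp. `v`) is a classical subsolution (resp. supersolution) of
`-∂_t w - (1/2)σ²∂_{xx}w = 0` on `[0,T) × (0,∞)`, both continuous on `[0,T] × [0,∞)`
and of linear growth `≤ K(1+x)`, with `u ≤ v` at the terminal time and at the boundary
`x = 0`, then `u ≤ v` everywhere on `[0,T] × [0,∞)`. -/
theorem stmt7 (σ : ℝ → ℝ) (hσc : ContinuousOn σ (Ioi 0))
    (hσpos : ∀ x > (0:ℝ), 0 < σ x)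
    (hdiv : ∫⁻ x in Ioi (1:ℝ), ENNReal.ofReal (x / σ x ^ 2) = ⊤)
    (hloc : LocallyIntegrableOn (fun u => 1 / σ u ^ 2) (Ioi 0))
    (T K : ℝ) (hT : 0 < T)
    (u v : ℝ → ℝ → ℝ)
    (ut ux uxx vt vx vxx : ℝ → ℝ → ℝ)
    (hucont : ContinuousOn (fun p : ℝ × ℝ => u p.1 p.2) (Icc 0 T ×ˢ Ici 0))
    (hvcont : ContinuousOn (fun p : ℝ × ℝ => v p.1 p.2) (Icc 0 T ×ˢ Ici 0))
    (hut : ∀ t x : ℝ, t ∈ Ico 0 T → 0 < x → HasDerivAt (fun s => u s x) (ut t x) t)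
    (hux : ∀ t x : ℝ, t ∈ Ico 0 T → 0 < x → HasDerivAt (fun y => u t y) (ux t x) x)
    (huxx : ∀ t x : ℝ, t ∈ Ico 0 T → 0 < x → HasDerivAt (fun y => ux t y) (uxx t x) x)
    (hvt : ∀ t x : ℝ, t ∈ Ico 0 T → 0 < x → HasDerivAt (fun s => v s x) (vt t x) t)
    (hvx : ∀ t x : ℝ, t ∈ Ico 0 T → 0 < x → HasDerivAt (fun y => v t y) (vx t x) x)
    (hvxx : ∀ t x : ℝ, t ∈ Ico 0 T → 0 < x → HasDerivAt (fun y => vx t y) (vxx t x) x)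
    (hugrow : ∀ t x : ℝ, t ∈ Icc 0 T → 0 ≤ x → |u t x| ≤ K * (1 + x))
    (hvgrow : ∀ t x : ℝ, t ∈ Icc 0 T → 0 ≤ x → |v t x| ≤ K * (1 + x))
    (husub : ∀ t x : ℝ, t ∈ Ico 0 T → 0 < x →
      -(ut t x) - (1/2) * σ x ^ 2 * uxx t x ≤ 0)
    (hvsup : ∀ t x : ℝ, t ∈ Ico 0 T → 0 < x →
      0 ≤ -(vt t x) - (1/2) * σ x ^ 2 * vxx t x)
    (hterm : ∀ x > (0:ℝ), u T x ≤ v T x)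
    (hbdry : ∀ t ∈ Icc (0:ℝ) T, u t 0 ≤ v t 0) :
    ∀ t ∈ Icc (0:ℝ) T, ∀ x ∈ Ici (0:ℝ), u t x ≤ v t x := by
  -- main comparison estimate on a compact rectangle
  have key : ∀ ε > (0:ℝ), ∀ δ > (0:ℝ), ∀ η R : ℝ, 0 < η → η < R →
      (∀ s ∈ Icc (0:ℝ) T, u s η - v s η ≤ ε) →
      (2 * K * (1 + R) ≤ ε * gfun σ R) →
      ∀ t' ∈ Icc (0:ℝ) T, ∀ x' ∈ Icc η R,
        u t' x' - v t' x' ≤ ε * Real.exp (T - t') * gfun σ x' + δ * (T - t') := by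
    intro ε hε δ hδ η R hη hηR hbd hRg t' ht' x' hx'
    set W : ℝ × ℝ → ℝ := fun p =>
      u p.1 p.2 - v p.1 p.2 - ε * Real.exp (T - p.1) * gfun σ p.2 - δ * (T - p.1) with hW
    set D : Set (ℝ × ℝ) := Icc (0:ℝ) T ×ˢ Icc η R with hD
    have hsubD : D ⊆ Icc (0:ℝ) T ×ˢ Ici 0 :=
      fun p hp => ⟨hp.1, le_trans hη.le hp.2.1⟩
    have hWc : ContinuousOn W D := by
      apply ContinuousOn.sub
      apply ContinuousOn.sub
      apply ContinuousOn.sub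
      · exact hucont.mono hsubD
      · exact hvcont.mono hsubD
      · apply ContinuousOn.mul
        · exact (continuous_const.mul
            (Real.continuous_exp.comp (continuous_const.sub continuous_fst))).continuousOn
        · exact (gfun_contOn hσc hσpos).comp continuous_snd.continuousOn
            (fun p hp => lt_of_lt_of_le hη hp.2.1)
      · exact (continuous_const.mul (continuous_const.sub continuous_fst)).continuousOn
    have hcomp : IsCompact D := isCompact_Icc.prod isCompact_Icc
    have hne : D.Nonempty := ⟨(t', x'), ⟨ht', hx'⟩⟩
    obtain ⟨⟨t₀, x₀⟩, hmem, hmax⟩ := hcomp.exists_isMaxOn hne hWc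
    obtain ⟨⟨ht₀0, ht₀T⟩, hx₀η, hx₀R⟩ := hmem
    replace ht₀0 : (0:ℝ) ≤ t₀ := ht₀0
    replace ht₀T : t₀ ≤ T := ht₀T
    replace hx₀η : η ≤ x₀ := hx₀η
    replace hx₀R : x₀ ≤ R := hx₀R
    have hx₀pos : 0 < x₀ := lt_of_lt_of_le hη hx₀η
    have hgx₀ : 1 + x₀ ≤ gfun σ x₀ := gfun_ge hσc hσpos hx₀pos
    suffices hW0 : W (t₀, x₀) ≤ 0 by
      have h1 := hmax (show (t', x') ∈ D from ⟨ht', hx'⟩)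
      simp only [hW, Set.mem_setOf_eq] at h1 hW0
      linarith
    rcases eq_or_lt_of_le ht₀T with hTeq | hTlt
    · -- terminal time
      have := hterm x₀ hx₀pos
      have hgp : 0 ≤ ε * gfun σ x₀ := mul_nonneg hε.le (by linarith)
      show u t₀ x₀ - v t₀ x₀ - ε * Real.exp (T - t₀) * gfun σ x₀ - δ * (T - t₀) ≤ 0
      rw [hTeq, sub_self, Real.exp_zero, mul_one, mul_zero]
      linarith
    · have ht₀Ico : t₀ ∈ Ico (0:ℝ) T := ⟨ht₀0, hTlt⟩
      have he1 : 1 ≤ Real.exp (T - t₀) := Real.one_le_exp (by linarith)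
      have hδT : 0 ≤ δ * (T - t₀) := mul_nonneg hδ.le (by linarith)
      rcases eq_or_lt_of_le hx₀η with hηeq | hηlt
      · -- boundary x = η
        have hb := hbd t₀ ⟨ht₀0, ht₀T⟩
        have hg1 : 1 ≤ gfun σ η := by
          have := gfun_ge hσc hσpos hη; linarith
        have h9 : 1 * 1 ≤ Real.exp (T - t₀) * gfun σ η :=
          mul_le_mul he1 hg1 one_pos.le (by linarith)
        have h10 : ε * 1 ≤ ε * (Real.exp (T - t₀) * gfun σ η) :=
          mul_le_mul_of_nonneg_left (by linarith) hε.le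
        have heq2 : ε * Real.exp (T - t₀) * gfun σ η = ε * (Real.exp (T - t₀) * gfun σ η) := by
          ring
        show u t₀ x₀ - v t₀ x₀ - ε * Real.exp (T - t₀) * gfun σ x₀ - δ * (T - t₀) ≤ 0
        rw [← hηeq]
        linarith
      rcases eq_or_lt_of_le hx₀R with hReq | hRlt
      · -- boundary x = R
        have hR0 : (0:ℝ) ≤ R := le_trans hη.le hηR.le
        have hu1 := hugrow t₀ R ⟨ht₀0, ht₀T⟩ hR0
        have hv1 := hvgrow t₀ R ⟨ht₀0, ht₀T⟩ hR0
        have hgR : 0 < gfun σ R := by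
          have := gfun_ge hσc hσpos (lt_of_lt_of_le hη hηR.le); linarith
        have h11 : ε * 1 ≤ ε * Real.exp (T - t₀) :=
          mul_le_mul_of_nonneg_left he1 hε.le
        have h12 : (ε * 1) * gfun σ R ≤ (ε * Real.exp (T - t₀)) * gfun σ R :=
          mul_le_mul_of_nonneg_right h11 hgR.le
        have hu2 : u t₀ R ≤ K * (1 + R) := le_trans (le_abs_self _) hu1
        have hv2 : -v t₀ R ≤ K * (1 + R) := le_trans (neg_le_abs _) hv1
        have heq3 : ε * 1 * gfun σ R = ε * gfun σ R := by ring
        show u t₀ x₀ - v t₀ x₀ - ε * Real.exp (T - t₀) * gfun σ x₀ - δ * (T - t₀) ≤ 0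
        rw [hReq]
        linarith
      · -- interior point: contradiction with δ > 0
        exfalso
        -- time direction
        have hexpD : HasDerivAt (fun s => Real.exp (T - s)) (Real.exp (T - t₀) * -1) t₀ :=
          (Real.hasDerivAt_exp (T - t₀)).comp t₀ ((hasDerivAt_id t₀).const_sub T)
        have hF : HasDerivAt
            (fun s => u s x₀ - v s x₀ - ε * Real.exp (T - s) * gfun σ x₀ - δ * (T - s))
            (ut t₀ x₀ - vt t₀ x₀ - ε * (Real.exp (T - t₀) * -1) * gfun σ x₀ - δ * -1) t₀ := by
          exact (((hut t₀ x₀ ht₀Ico hx₀pos).sub (hvt t₀ x₀ ht₀Ico hx₀pos)).sub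
            ((hexpD.const_mul ε).mul_const (gfun σ x₀))).sub
            (((hasDerivAt_id t₀).const_sub T).const_mul δ)
        have hF' : HasDerivAt
            (fun s => u s x₀ - v s x₀ - ε * Real.exp (T - s) * gfun σ x₀ - δ * (T - s))
            (ut t₀ x₀ - vt t₀ x₀ + ε * Real.exp (T - t₀) * gfun σ x₀ + δ) t₀ := by
          convert hF using 1; ring
        have hdt : ut t₀ x₀ - vt t₀ x₀ + ε * Real.exp (T - t₀) * gfun σ x₀ + δ ≤ 0 := by
          apply deriv_nonpos_of_max_right hTlt _ hF'
          intro s hs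
          have := hmax (show (s, x₀) ∈ D from ⟨⟨le_trans ht₀0 hs.1.le, hs.2.le⟩, hx₀η, hx₀R⟩)
          simp only [hW, Set.mem_setOf_eq] at this
          linarith
        -- space direction
        have hG : ∀ᶠ y in 𝓝 x₀, HasDerivAt
            (fun y => u t₀ y - v t₀ y - ε * Real.exp (T - t₀) * gfun σ y - δ * (T - t₀))
            (ux t₀ y - vx t₀ y - ε * Real.exp (T - t₀) * (1 + Gone σ y)) y := by
          filter_upwards [isOpen_Ioi.eventually_mem hx₀pos] with y hy
          exact (((hux t₀ y ht₀Ico hy).sub (hvx t₀ y ht₀Ico hy)).sub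
            ((gfun_hasDeriv hσc hσpos hy).const_mul (ε * Real.exp (T - t₀)))).sub_const _
        have hφ : HasDerivAt (fun y => ux t₀ y - vx t₀ y - ε * Real.exp (T - t₀) * (1 + Gone σ y))
            (uxx t₀ x₀ - vxx t₀ x₀ - ε * Real.exp (T - t₀) * mfun σ x₀) x₀ :=
          ((huxx t₀ x₀ ht₀Ico hx₀pos).sub (hvxx t₀ x₀ ht₀Ico hx₀pos)).sub
            (((Gone_hasDeriv hσc hσpos hx₀pos).const_add 1).const_mul (ε * Real.exp (T - t₀)))
        have hlmax : IsLocalMax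
            (fun y => u t₀ y - v t₀ y - ε * Real.exp (T - t₀) * gfun σ y - δ * (T - t₀)) x₀ := by
          filter_upwards [Icc_mem_nhds hηlt hRlt] with y hy
          have := hmax (show (t₀, y) ∈ D from ⟨⟨ht₀0, ht₀T⟩, hy⟩)
          simp only [hW, Set.mem_setOf_eq] at this
          exact this
        have hc2 : uxx t₀ x₀ - vxx t₀ x₀ - ε * Real.exp (T - t₀) * mfun σ x₀ ≤ 0 :=
          second_deriv_nonpos_of_localmax hG hφ hlmax
        -- combine with PDE inequalities
        have hkey := gfun_key hσc hσpos hx₀pos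
        have hσ2 : (0:ℝ) ≤ (1/2) * σ x₀ ^ 2 := by positivity
        have h1 : (1/2) * σ x₀ ^ 2 * (uxx t₀ x₀ - vxx t₀ x₀) ≤
            (1/2) * σ x₀ ^ 2 * (ε * Real.exp (T - t₀) * mfun σ x₀) :=
          mul_le_mul_of_nonneg_left (by linarith) hσ2
        have hεe : (0:ℝ) ≤ ε * Real.exp (T - t₀) := by positivity
        have h3 : (ε * Real.exp (T - t₀)) * ((1/2) * σ x₀ ^ 2 * mfun σ x₀) ≤
            (ε * Real.exp (T - t₀)) * gfun σ x₀ :=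
          mul_le_mul_of_nonneg_left hkey hεe
        have hsb := husub t₀ x₀ ht₀Ico hx₀pos
        have hsp := hvsup t₀ x₀ ht₀Ico hx₀pos
        have hx1 : (1/2) * σ x₀ ^ 2 * (uxx t₀ x₀ - vxx t₀ x₀) =
            (1/2) * σ x₀ ^ 2 * uxx t₀ x₀ - (1/2) * σ x₀ ^ 2 * vxx t₀ x₀ := by ring
        have h2eq : (1/2) * σ x₀ ^ 2 * (ε * Real.exp (T - t₀) * mfun σ x₀) =
            (ε * Real.exp (T - t₀)) * ((1/2) * σ x₀ ^ 2 * mfun σ x₀) := by ring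
        linarith
  intro t ht x hx
  rcases eq_or_lt_of_le (show (0:ℝ) ≤ x from hx) with hx0 | hxpos
  · exact hx0 ▸ hbdry t ht
  · have hgrow00 := hugrow 0 0 ⟨le_rfl, hT.le⟩ le_rfl
    have hK0 : 0 ≤ K := by nlinarith [abs_nonneg (u 0 0)]
    by_contra hlt
    push_neg at hlt
    set ε' := u t x - v t x with hε'
    have hε'pos : 0 < ε' := by simp only [hε']; linarith
    have hgx : 0 < gfun σ x := by have := gfun_ge hσc hσpos hxpos; linarith
    have hE : 0 < Real.exp T := Real.exp_pos T
    set ε := ε' / (4 * Real.exp T * gfun σ x) with hεdef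
    have hε : 0 < ε := by positivity
    set δ := ε' / (4 * T) with hδdef
    have hδ : 0 < δ := by positivity
    -- uniform continuity near the boundary x = 0
    have hsub1 : (Icc (0:ℝ) T ×ˢ Icc (0:ℝ) 1) ⊆ Icc 0 T ×ˢ Ici 0 :=
      fun p hp => ⟨hp.1, hp.2.1⟩
    have hwc : ContinuousOn (fun p : ℝ × ℝ => u p.1 p.2 - v p.1 p.2)
        (Icc (0:ℝ) T ×ˢ Icc (0:ℝ) 1) := (hucont.mono hsub1).sub (hvcont.mono hsub1)
    have hKc : IsCompact (Icc (0:ℝ) T ×ˢ Icc (0:ℝ) 1) := isCompact_Icc.prod isCompact_Icc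
    have hUC := hKc.uniformContinuousOn_of_continuous hwc
    rw [Metric.uniformContinuousOn_iff] at hUC
    obtain ⟨d, hd, hduc⟩ := hUC ε hε
    set η := min (d/2) (min x 1) with hηdef
    have hη : 0 < η := lt_min (by linarith) (lt_min hxpos one_pos)
    have hη1 : η ≤ 1 := le_trans (min_le_right _ _) (min_le_right _ _)
    have hηx : η ≤ x := le_trans (min_le_right _ _) (min_le_left _ _)
    have hbd : ∀ s ∈ Icc (0:ℝ) T, u s η - v s η ≤ ε := by
      intro s hs
      have hmem1 : (s, η) ∈ Icc (0:ℝ) T ×ˢ Icc (0:ℝ) 1 := ⟨hs, hη.le, hη1⟩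
      have hmem2 : (s, (0:ℝ)) ∈ Icc (0:ℝ) T ×ˢ Icc (0:ℝ) 1 := ⟨hs, le_rfl, zero_le_one⟩
      have hdist : dist (s, η) (s, (0:ℝ)) < d := by
        rw [Prod.dist_eq]
        have h1 : dist s s = 0 := dist_self s
        have h2 : dist η 0 = η := by rw [Real.dist_eq, sub_zero, abs_of_pos hη]
        rw [h1, h2, max_eq_right hη.le]
        have := min_le_left (d/2) (min x 1)
        linarith
      have hd2 := hduc _ hmem1 _ hmem2 hdist
      rw [Real.dist_eq] at hd2
      simp only at hd2
      have habs := abs_lt.mp hd2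
      have hb0 := hbdry s hs
      linarith [habs.2]
    -- superlinearity gives the far lateral boundary
    obtain ⟨R₀, hR₀1, hR₀⟩ := gfun_superlinear hσc hσpos hdiv ((2*K + 1)/ε) (by positivity)
    set R := max R₀ (max x 2) with hRdef
    have hxR : x ≤ R := le_trans (le_max_left _ _) (le_max_right _ _)
    have hRR₀ : R₀ ≤ R := le_max_left _ _
    have hR2 : (2:ℝ) ≤ R := le_trans (le_max_right _ _) (le_max_right _ _)
    have hηR : η < R := by linarith
    have hRg : 2 * K * (1 + R) ≤ ε * gfun σ R := by
      have h := hR₀ R hRR₀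
      have h1R : (0:ℝ) ≤ 1 + R := by linarith
      have h6 := mul_le_mul_of_nonneg_left h hε.le
      have heq : ε * ((2*K + 1)/ε * (1 + R)) = (2*K + 1) * (1 + R) := by
        field_simp
      rw [heq] at h6
      nlinarith [h1R]
    -- apply the key estimate
    have happ := key ε hε δ hδ η R hη hηR hbd hRg t ht x ⟨hηx, hxR⟩
    have hle1 : Real.exp (T - t) ≤ Real.exp T := Real.exp_le_exp.mpr (by linarith [ht.1])
    have h2 : ε * Real.exp (T - t) * gfun σ x ≤ ε * Real.exp T * gfun σ x :=
      mul_le_mul_of_nonneg_right (mul_le_mul_of_nonneg_left hle1 hε.le) hgx.le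
    have h3 : ε * Real.exp T * gfun σ x = ε'/4 := by
      rw [hεdef]; field_simp
    have h4 : δ * (T - t) ≤ δ * T := mul_le_mul_of_nonneg_left (by linarith [ht.1]) hδ.le
    have h5 : δ * T = ε'/4 := by
      rw [hδdef]; field_simp
    have hfin : ε' ≤ ε'/4 + ε'/4 := by
      calc ε' = u t x - v t x := rfl
        _ ≤ ε * Real.exp (T - t) * gfun σ x + δ * (T - t) := happ
        _ ≤ ε'/4 + ε'/4 := by linarith
    linarith
end

section
/- Let X be a nonnegative continuous local martingale on [0,T] with X_0 = x > 0, and suppose X is a strict local martingale: E[X_T] < x. Let Y := X/(1+X) and τ := inf{s ≥ 0 : Y_s ∉ (0,1)} ∧ T. Suppose Q is a probability measure such that Y is a Q-martingale and dP = ((1−Y_T)/(1−y)) dQ with y = x/(1+x). Then Q(Y_τ = 1) > 0. -/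
open MeasureTheory Filter Set
open scoped Topology

section Aux

variable {Ω : Type*} {mΩ : MeasurableSpace Ω}

/-- If a continuous path hits a closed set in `[0,T]`, its value at the hitting time lies
in the set. -/
lemma aux_hitting_mem {Y : ℝ → Ω → ℝ} {F : Set ℝ} {T : ℝ} {ω : Ω}
    (hF : IsClosed F) (hc : Continuous fun s => Y s ω)
    (h : ∃ j ∈ Set.Icc (0:ℝ) T, Y j ω ∈ F) :
    Y (hittingBtwn Y F 0 T ω) ω ∈ F := by
  have hS : IsClosed (Set.Icc (0:ℝ) T ∩ {i | Y i ω ∈ F}) :=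
    isClosed_Icc.inter (hF.preimage hc)
  have hne : (Set.Icc (0:ℝ) T ∩ {i | Y i ω ∈ F}).Nonempty := by
    obtain ⟨j, hj, hjF⟩ := h; exact ⟨j, hj, hjF⟩
  have hbdd : BddBelow (Set.Icc (0:ℝ) T ∩ {i | Y i ω ∈ F}) :=
    BddBelow.inter_of_left bddBelow_Icc
  have hmem := hS.csInf_mem hne hbdd
  have : hittingBtwn Y F 0 T ω = sInf (Set.Icc (0:ℝ) T ∩ {i | Y i ω ∈ F}) := by
    simp only [hittingBtwn, if_pos h]
  rw [this]
  exact hmem.2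

/-- The hitting time of a closed set by a continuous adapted process is a stopping time. -/
lemma aux_hitting_isStoppingTime (ℱ : Filtration ℝ mΩ) {Y : ℝ → Ω → ℝ} {F : Set ℝ}
    (hadp : StronglyAdapted ℱ Y) (hc : ∀ ω, Continuous fun s => Y s ω)
    (hF : IsClosed F) (hFne : F.Nonempty) {T : ℝ} (hT : 0 ≤ T) :
    IsStoppingTime ℱ (fun ω => ((hittingBtwn Y F 0 T ω : ℝ) : WithTop ℝ)) := by
  intro t
  simp only [WithTop.coe_le_coe]
  rcases lt_or_ge t 0 with ht | ht
  · have hempty : {ω | hittingBtwn Y F 0 T ω ≤ t} = (∅ : Set Ω) := by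
      ext ω
      simp only [Set.mem_setOf_eq, Set.mem_empty_iff_false, iff_false, not_le]
      exact lt_of_lt_of_le ht (le_hittingBtwn hT ω)
    rw [hempty]
    exact @MeasurableSet.empty _ (ℱ t)
  rcases le_or_gt T t with htT | htT
  · have huniv : {ω | hittingBtwn Y F 0 T ω ≤ t} = (Set.univ : Set Ω) := by
      ext ω
      simp only [Set.mem_setOf_eq, Set.mem_univ, iff_true]
      exact le_trans (hittingBtwn_le ω) htT
    rw [huniv]
    exact MeasurableSet.univ
  -- now 0 ≤ t < T
  obtain ⟨D, hDsub, hDc, hDd⟩ :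
      ∃ D ⊆ Set.Icc (0:ℝ) t, D.Countable ∧ Set.Icc (0:ℝ) t ⊆ closure D := by
    obtain ⟨D0, hD0c, hD0d⟩ := TopologicalSpace.exists_countable_dense (Set.Icc (0:ℝ) t)
    refine ⟨Subtype.val '' D0, ?_, hD0c.image _, ?_⟩
    · rintro _ ⟨⟨q, hq⟩, _, rfl⟩; exact hq
    · intro j hj
      have h1 : (⟨j, hj⟩ : Set.Icc (0:ℝ) t) ∈ closure D0 := hD0d _
      have h2 := image_closure_subset_closure_image
        (f := (Subtype.val : Set.Icc (0:ℝ) t → ℝ)) (s := D0) continuous_subtype_val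
      exact h2 ⟨_, h1, rfl⟩
  have key : {ω | hittingBtwn Y F 0 T ω ≤ t}
      = ⋂ n : ℕ, ⋃ q ∈ D, {ω | Metric.infDist (Y q ω) F < ((n:ℝ)+1)⁻¹} := by
    ext ω
    simp only [Set.mem_setOf_eq, Set.mem_iInter, Set.mem_iUnion, exists_prop]
    constructor
    · intro hτt n
      have hex : ∃ j ∈ Set.Icc (0:ℝ) T, Y j ω ∈ F := by
        by_contra hne
        have : hittingBtwn Y F 0 T ω = T := by simp only [hittingBtwn, if_neg hne]
        rw [this] at hτt
        exact absurd hτt (not_le.mpr htT)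
      have hmem := aux_hitting_mem hF (hc ω) hex
      set j := hittingBtwn Y F 0 T ω with hjdef
      have hjIcc : j ∈ Set.Icc (0:ℝ) t := ⟨le_hittingBtwn hT ω, hτt⟩
      have hcont : Continuous fun s => Metric.infDist (Y s ω) F :=
        (Metric.continuous_infDist_pt F).comp (hc ω)
      have hval : Metric.infDist (Y j ω) F = 0 := Metric.infDist_zero_of_mem hmem
      have hopen : IsOpen {s : ℝ | Metric.infDist (Y s ω) F < ((n:ℝ)+1)⁻¹} :=
        isOpen_lt hcont continuous_const
      have hjU : j ∈ {s : ℝ | Metric.infDist (Y s ω) F < ((n:ℝ)+1)⁻¹} := by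
        simp only [Set.mem_setOf_eq, hval]
        positivity
      obtain ⟨q, hqU, hqD⟩ := mem_closure_iff.mp (hDd hjIcc) _ hopen hjU
      exact ⟨q, hqD, hqU⟩
    · intro h
      choose q hqD hq using h
      have hqIcc : ∀ n, q n ∈ Set.Icc (0:ℝ) t := fun n => hDsub (hqD n)
      obtain ⟨j, hjIcc, φ, hφ, hconv⟩ := isCompact_Icc.tendsto_subseq hqIcc
      have hcont : Continuous fun s => Metric.infDist (Y s ω) F :=
        (Metric.continuous_infDist_pt F).comp (hc ω)
      have h1 : Tendsto (fun n => Metric.infDist (Y (q (φ n)) ω) F) atTop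
          (𝓝 (Metric.infDist (Y j ω) F)) := (hcont.tendsto j).comp hconv
      have hupper : Tendsto (fun n : ℕ => ((φ n : ℝ)+1)⁻¹) atTop (𝓝 0) := by
        have h2 : Tendsto (fun n : ℕ => ((φ n : ℝ)+1)) atTop atTop :=
          tendsto_atTop_add_const_right _ 1
            (tendsto_natCast_atTop_atTop.comp hφ.tendsto_atTop)
        exact tendsto_inv_atTop_zero.comp h2
      have h0 : Tendsto (fun n => Metric.infDist (Y (q (φ n)) ω) F) atTop (𝓝 0) :=
        tendsto_of_tendsto_of_tendsto_of_le_of_le tendsto_const_nhds hupper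
          (fun n => Metric.infDist_nonneg) (fun n => (hq (φ n)).le)
      have hzero : Metric.infDist (Y j ω) F = 0 := tendsto_nhds_unique h1 h0
      have hjF : Y j ω ∈ F := (hF.mem_iff_infDist_zero hFne).mpr hzero
      exact le_trans (hittingBtwn_le_of_mem hjIcc.1 (le_trans hjIcc.2 htT.le) hjF) hjIcc.2
  rw [key]
  refine MeasurableSet.iInter fun n => MeasurableSet.biUnion hDc fun q hq => ?_
  have hmeas : StronglyMeasurable[ℱ t] (Y q) := (hadp q).mono (ℱ.mono (hDsub hq).2)
  exact measurableSet_lt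
    ((Metric.continuous_infDist_pt F).measurable.comp hmeas.measurable) measurable_const

end Aux

/-- Let `X` be a nonnegative continuous local martingale under `P`
with `X_0 = x > 0` which is a strict local martingale (`E_P[X_T] < x`). Let
`Y = X/(1+X)` (`P`-a.s.), `y = x/(1+x)`, and `τ` the exit time of `(0,1)` for `Y`
capped at `T`. If `Q` is a probability under which `Y` is a martingale and
`dP = ((1-Y_T)/(1-y)) dQ`, then `Q(Y_τ = 1) > 0`. -/
theorem stmt14 {Ω : Type*} {mΩ : MeasurableSpace Ω} (ℱ : Filtration ℝ mΩ)
    (P Q : Measure Ω) [IsProbabilityMeasure P] [IsProbabilityMeasure Q]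
    (T x : ℝ) (hT : 0 < T) (hx : 0 < x)
    (X : ℝ → Ω → ℝ)
    (hXcont : ∀ ω, Continuous fun s => X s ω)
    (hXnn : ∀ s ω, 0 ≤ X s ω)
    (hX0 : ∀ ω, X 0 ω = x)
    (hXloc : IsLocMart ℱ X P)
    (hstrict : ∫ ω, X T ω ∂P < x)
    (Y : ℝ → Ω → ℝ)
    (hYP : ∀ᵐ ω ∂P, ∀ s, Y s ω = X s ω / (1 + X s ω))
    (hY01 : ∀ s ω, 0 ≤ Y s ω ∧ Y s ω ≤ 1)
    (hYcont : ∀ ω, Continuous fun s => Y s ω)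
    (hYQ : Martingale Y ℱ Q)
    (hPQ : P = Q.withDensity fun ω =>
      ENNReal.ofReal ((1 - Y T ω) / (1 - x / (1 + x)))) :
    0 < Q {ω | stoppedValue Y (fun ω => ((hittingBtwn Y (Ioo (0:ℝ) 1)ᶜ 0 T ω : ℝ) : WithTop ℝ)) ω = 1} := by
  set y := x / (1 + x) with hy
  have hx1 : (0:ℝ) < 1 + x := by linarith
  have hy0 : 0 < y := div_pos hx hx1
  have hy1 : y < 1 := by rw [hy]; exact (div_lt_one hx1).mpr (by linarith)
  have h1y : 0 < 1 - y := by linarith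
  set F : Set ℝ := (Set.Ioo (0:ℝ) 1)ᶜ with hFdef
  have hFclosed : IsClosed F := isOpen_Ioo.isClosed_compl
  have hFne : F.Nonempty := ⟨2, by norm_num [hFdef, Set.mem_Ioo]⟩
  set τ := hittingBtwn Y F 0 T with hτdef
  have hτ : IsStoppingTime ℱ (fun ω => (τ ω : WithTop ℝ)) :=
    aux_hitting_isStoppingTime ℱ hYQ.stronglyAdapted hYcont hFclosed hFne hT.le
  have hτ0 : ∀ ω, 0 ≤ τ ω := fun ω => le_hittingBtwn hT.le ω
  have hτT : ∀ ω, τ ω ≤ T := fun ω => hittingBtwn_le ω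
  have hYTm : StronglyMeasurable (Y T) := (hYQ.stronglyMeasurable T).mono (ℱ.le T)
  have hprog : ProgMeasurable ℱ Y := hYQ.stronglyAdapted.progMeasurable_of_continuous hYcont
  set Z := stoppedValue Y (fun ω => (τ ω : WithTop ℝ)) with hZdef
  have hZmeas : Measurable Z :=
    (measurable_stoppedValue hprog hτ).mono hτ.measurableSpace_le le_rfl
  -- Step 1 : `∫ Y T ∂Q = y`
  have hintYT : Integrable (Y T) Q := hYQ.integrable T
  have hIY : ∫ ω, Y T ω ∂Q = y := by
    have hQ1 : ∫⁻ ω, ENNReal.ofReal ((1 - Y T ω) / (1 - y)) ∂Q = 1 := by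
      have hμ := measure_univ (μ := P)
      rw [hPQ, withDensity_apply _ MeasurableSet.univ, setLIntegral_univ] at hμ
      exact hμ
    have hint1 : Integrable (fun ω => (1 - Y T ω) / (1 - y)) Q :=
      ((integrable_const (1:ℝ)).sub hintYT).div_const _
    have hnn1 : 0 ≤ᵐ[Q] fun ω => (1 - Y T ω) / (1 - y) :=
      ae_of_all _ fun ω => div_nonneg (by linarith [(hY01 T ω).2]) h1y.le
    have h2 := ofReal_integral_eq_lintegral_ofReal hint1 hnn1
    rw [hQ1] at h2
    have h3 : ∫ ω, (1 - Y T ω) / (1 - y) ∂Q = 1 := ENNReal.ofReal_eq_one.mp h2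
    rw [integral_div] at h3
    have h4 : ∫ ω, (1 - Y T ω) ∂Q = 1 - y := by
      field_simp at h3
      linarith
    have h5 : ∫ ω, (1 - Y T ω) ∂Q = 1 - ∫ ω, Y T ω ∂Q := by
      rw [integral_sub (integrable_const _) hintYT]
      simp
    linarith
  -- Step 2 : optional sampling, `∫ Z ∂Q = y`
  have hpow : ∀ n : ℕ, (0:ℝ) < 2 ^ n := fun n => pow_pos two_pos n
  have hTdiv : ∀ n : ℕ, (0:ℝ) < T / 2 ^ n := fun n => div_pos hT (hpow n)
  set σ : ℕ → Ω → ℝ := fun n ω => (⌈τ ω * 2 ^ n / T⌉ : ℤ) * (T / 2 ^ n) with hσdef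
  have hτσ : ∀ n ω, τ ω ≤ σ n ω := by
    intro n ω
    have h1 : τ ω * 2 ^ n / T ≤ (⌈τ ω * 2 ^ n / T⌉ : ℝ) := Int.le_ceil _
    calc τ ω = τ ω * 2 ^ n / T * (T / 2 ^ n) := by field_simp
    _ ≤ (⌈τ ω * 2 ^ n / T⌉ : ℝ) * (T / 2 ^ n) :=
      mul_le_mul_of_nonneg_right h1 (hTdiv n).le
  have hσT : ∀ n, ∀ ω, σ n ω ≤ T := by
    intro n ω
    have h1 : (⌈τ ω * 2 ^ n / T⌉ : ℤ) ≤ 2 ^ n := by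
      rw [Int.ceil_le]
      push_cast
      rw [div_le_iff₀ hT]
      have := mul_le_mul_of_nonneg_right (hτT ω) (hpow n).le
      linarith
    calc σ n ω ≤ (2:ℝ) ^ n * (T / 2 ^ n) := by
          exact mul_le_mul_of_nonneg_right (by exact_mod_cast h1) (hTdiv n).le
    _ = T := by field_simp
  have hσst : ∀ n, IsStoppingTime ℱ (fun ω => (σ n ω : WithTop ℝ)) := by
    intro n t
    simp only [WithTop.coe_le_coe]
    have hset : {ω | σ n ω ≤ t} = {ω | τ ω ≤ (⌊t * 2 ^ n / T⌋ : ℤ) * (T / 2 ^ n)} := by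
      ext ω
      simp only [Set.mem_setOf_eq, hσdef]
      constructor
      · intro h
        have h1 : (⌈τ ω * 2 ^ n / T⌉ : ℝ) ≤ t * 2 ^ n / T := by
          rw [← le_div_iff₀ (hTdiv n)] at h
          calc (⌈τ ω * 2 ^ n / T⌉ : ℝ) ≤ t / (T / 2 ^ n) := h
          _ = t * 2 ^ n / T := by rw [div_div_eq_mul_div]
        have h2 : (⌈τ ω * 2 ^ n / T⌉ : ℤ) ≤ ⌊t * 2 ^ n / T⌋ :=
          Int.le_floor.mpr (by exact_mod_cast h1)
        have h3 : τ ω * 2 ^ n / T ≤ ((⌊t * 2 ^ n / T⌋ : ℤ) : ℝ) :=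
          le_trans (Int.le_ceil _) (by exact_mod_cast h2)
        calc τ ω = τ ω * 2 ^ n / T * (T / 2 ^ n) := by field_simp
        _ ≤ ((⌊t * 2 ^ n / T⌋ : ℤ) : ℝ) * (T / 2 ^ n) :=
          mul_le_mul_of_nonneg_right h3 (hTdiv n).le
      · intro h
        have h3 : τ ω * 2 ^ n / T ≤ ((⌊t * 2 ^ n / T⌋ : ℤ) : ℝ) := by
          have h4 := mul_le_mul_of_nonneg_right h (div_pos (hpow n) hT).le
          calc τ ω * 2 ^ n / T = τ ω * (2 ^ n / T) := by ring
          _ ≤ ((⌊t * 2 ^ n / T⌋ : ℤ) : ℝ) * (T / 2 ^ n) * (2 ^ n / T) := h4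
          _ = ((⌊t * 2 ^ n / T⌋ : ℤ) : ℝ) := by field_simp
        have h5 : (⌈τ ω * 2 ^ n / T⌉ : ℤ) ≤ ⌊t * 2 ^ n / T⌋ := Int.ceil_le.mpr h3
        calc (⌈τ ω * 2 ^ n / T⌉ : ℝ) * (T / 2 ^ n)
            ≤ ((⌊t * 2 ^ n / T⌋ : ℤ) : ℝ) * (T / 2 ^ n) :=
          mul_le_mul_of_nonneg_right (by exact_mod_cast h5) (hTdiv n).le
        _ ≤ t * 2 ^ n / T * (T / 2 ^ n) :=
          mul_le_mul_of_nonneg_right (Int.floor_le _) (hTdiv n).le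
        _ = t := by field_simp
    rw [hset]
    have hd : ((⌊t * 2 ^ n / T⌋ : ℤ) : ℝ) * (T / 2 ^ n) ≤ t := by
      calc ((⌊t * 2 ^ n / T⌋ : ℤ) : ℝ) * (T / 2 ^ n)
          ≤ t * 2 ^ n / T * (T / 2 ^ n) :=
        mul_le_mul_of_nonneg_right (Int.floor_le _) (hTdiv n).le
      _ = t := by field_simp
    have hτm := hτ (((⌊t * 2 ^ n / T⌋ : ℤ) : ℝ) * (T / 2 ^ n))
    simp only [WithTop.coe_le_coe] at hτm
    exact ℱ.mono hd _ hτm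
  have hσcnt : ∀ n, (Set.range (σ n)).Countable := by
    intro n
    refine Set.Countable.mono ?_ (Set.countable_range fun k : ℤ => (k : ℝ) * (T / 2 ^ n))
    rintro _ ⟨ω, rfl⟩
    exact ⟨⌈τ ω * 2 ^ n / T⌉, rfl⟩
  have hOS : ∀ n, ∫ ω, stoppedValue Y (fun ω => (σ n ω : WithTop ℝ)) ω ∂Q = y := by
    intro n
    have hσT' : ∀ ω, (σ n ω : WithTop ℝ) ≤ (T : WithTop ℝ) :=
      fun ω => WithTop.coe_le_coe.mpr (hσT n ω)
    have hσcnt' : (Set.range (fun ω => (σ n ω : WithTop ℝ))).Countable := by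
      have := (hσcnt n).image (fun r : ℝ => (r : WithTop ℝ))
      rwa [← Set.range_comp] at this
    have h := hYQ.stoppedValue_ae_eq_condExp_of_le_const_of_countable_range
      (hσst n) hσT' hσcnt'
    rw [integral_congr_ae h,
      integral_condExp ((hσst n).measurableSpace_le_of_le hσT'), hIY]
  have hconvZ : ∀ ω, Tendsto (fun n => stoppedValue Y (fun ω => (σ n ω : WithTop ℝ)) ω) atTop (𝓝 (Z ω)) := by
    intro ω
    have hub : ∀ n, σ n ω ≤ τ ω + T / 2 ^ n := by
      intro n
      have h1 : (⌈τ ω * 2 ^ n / T⌉ : ℝ) ≤ τ ω * 2 ^ n / T + 1 := (Int.ceil_lt_add_one _).le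
      calc σ n ω ≤ (τ ω * 2 ^ n / T + 1) * (T / 2 ^ n) :=
        mul_le_mul_of_nonneg_right h1 (hTdiv n).le
      _ = τ ω + T / 2 ^ n := by field_simp
    have hlim0 : Tendsto (fun n : ℕ => T / 2 ^ n) atTop (𝓝 0) := by
      simp_rw [div_eq_mul_inv, ← inv_pow]
      rw [show (0:ℝ) = T * 0 by ring]
      exact tendsto_const_nhds.mul
        (tendsto_pow_atTop_nhds_zero_of_lt_one (by norm_num) (by norm_num))
    have hlim : Tendsto (fun n : ℕ => τ ω + T / 2 ^ n) atTop (𝓝 (τ ω)) := by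
      simpa using tendsto_const_nhds.add hlim0
    have hσconv : Tendsto (fun n => σ n ω) atTop (𝓝 (τ ω)) :=
      tendsto_of_tendsto_of_tendsto_of_le_of_le tendsto_const_nhds hlim
        (fun n => hτσ n ω) hub
    exact (((hYcont ω).tendsto (τ ω)).comp hσconv)
  have hZI : ∫ ω, Z ω ∂Q = y := by
    have hDCT := tendsto_integral_of_dominated_convergence (μ := Q)
      (F := fun n => stoppedValue Y (fun ω => (σ n ω : WithTop ℝ))) (f := Z) (fun _ => (1:ℝ))
      (fun n => ((measurable_stoppedValue hprog (hσst n)).mono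
        (hσst n).measurableSpace_le le_rfl).stronglyMeasurable.aestronglyMeasurable)
      (integrable_const 1)
      (fun n => ae_of_all _ fun ω => by
        show ‖Y (σ n ω) ω‖ ≤ 1
        rw [Real.norm_eq_abs]
        exact abs_le.mpr ⟨by linarith [(hY01 (σ n ω) ω).1], (hY01 (σ n ω) ω).2⟩)
      (ae_of_all _ hconvZ)
    have hconst : Tendsto (fun n => ∫ ω, stoppedValue Y (fun ω => (σ n ω : WithTop ℝ)) ω ∂Q) atTop (𝓝 y) := by
      simp only [hOS]
      exact tendsto_const_nhds
    exact tendsto_nhds_unique hDCT hconst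
  -- Step 3 : contradiction argument
  by_contra hcon
  have hA0 : Q {ω | Z ω = 1} = 0 := le_zero_iff.mp (not_lt.mp hcon)
  set A := {ω | Z ω = 1} with hAdef
  have hAmeas : MeasurableSet A := hZmeas (measurableSet_singleton 1)
  set W : Ω → ℝ := fun ω => if Y T ω < 1 then Y T ω else 0 with hWdef
  have hWmeas : Measurable W :=
    Measurable.ite (measurableSet_lt hYTm.measurable measurable_const)
      hYTm.measurable measurable_const
  have hWnn : ∀ ω, 0 ≤ W ω := by
    intro ω
    simp only [hWdef]
    split_ifs
    · exact (hY01 T ω).1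
    · exact le_refl 0
  have hWle : ∀ ω, W ω ≤ Y T ω := by
    intro ω
    simp only [hWdef]
    split_ifs
    · exact le_refl _
    · exact (hY01 T ω).1
  set g : Ω → ℝ := fun ω => Y T ω / (1 - Y T ω) with hgdef
  have hgm : Measurable g := hYTm.measurable.div (measurable_const.sub hYTm.measurable)
  have hgnn : ∀ ω, 0 ≤ g ω := fun ω =>
    div_nonneg (hY01 T ω).1 (by linarith [(hY01 T ω).2])
  -- pointwise inequality
  have hpt : ∀ ω, ENNReal.ofReal (Z ω)
      ≤ ENNReal.ofReal (W ω) + A.indicator (fun _ => (1:ENNReal)) ω := by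
    intro ω
    by_cases hω : Z ω = 1
    · have hωA : ω ∈ A := hω
      rw [Set.indicator_of_mem hωA, hω]
      simp only [ENNReal.ofReal_one]
      exact le_add_self
    · have hZW : Z ω ≤ W ω := by
        by_cases hex : ∃ j ∈ Set.Icc (0:ℝ) T, Y j ω ∈ F
        · have hmem : Y (τ ω) ω ∈ F := aux_hitting_mem hFclosed (hYcont ω) hex
          have hZY : Z ω = Y (τ ω) ω := rfl
          have h0 := (hY01 (τ ω) ω).1
          have h1 := (hY01 (τ ω) ω).2
          simp only [hFdef, Set.mem_compl_iff, Set.mem_Ioo, not_and, not_lt] at hmem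
          have hlt : Y (τ ω) ω < 1 := lt_of_le_of_ne h1 (hZY ▸ hω)
          have hZ0 : Z ω = 0 := by
            rw [hZY]
            rcases lt_or_ge 0 (Y (τ ω) ω) with hpos | hle
            · linarith [hmem hpos]
            · linarith
          rw [hZ0]
          exact hWnn ω
        · have hτeq : τ ω = T := by
            simp only [hτdef, hittingBtwn, if_neg hex]
          have hYT : Y T ω ∈ Set.Ioo (0:ℝ) 1 := by
            by_contra hc2
            exact hex ⟨T, ⟨hT.le, le_refl T⟩, hc2⟩
          have hZY : Z ω = Y T ω := by
            show Y (τ ω) ω = Y T ω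
            rw [hτeq]
          rw [hZY]
          simp only [hWdef, if_pos hYT.2]
          exact le_refl _
      calc ENNReal.ofReal (Z ω) ≤ ENNReal.ofReal (W ω) := ENNReal.ofReal_le_ofReal hZW
      _ ≤ _ := le_self_add
  -- integrate the pointwise inequality
  have hZintble : Integrable Z Q := by
    refine ⟨hZmeas.stronglyMeasurable.aestronglyMeasurable, ?_⟩
    refine HasFiniteIntegral.of_bounded (C := 1) (ae_of_all _ fun ω => ?_)
    show ‖Y (τ ω) ω‖ ≤ 1
    rw [Real.norm_eq_abs]
    exact abs_le.mpr ⟨by linarith [(hY01 (τ ω) ω).1], (hY01 (τ ω) ω).2⟩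
  have hLHS : ∫⁻ ω, ENNReal.ofReal (Z ω) ∂Q = ENNReal.ofReal y := by
    rw [← ofReal_integral_eq_lintegral_ofReal hZintble
      (ae_of_all _ fun ω => (hY01 (τ ω) ω).1), hZI]
  have hind : ∫⁻ ω, A.indicator (fun _ => (1:ENNReal)) ω ∂Q = 0 := by
    rw [lintegral_indicator hAmeas]
    simp [hA0]
  have hIWfull : ENNReal.ofReal y ≤ ∫⁻ ω, ENNReal.ofReal (W ω) ∂Q := by
    calc ENNReal.ofReal y = ∫⁻ ω, ENNReal.ofReal (Z ω) ∂Q := hLHS.symm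
    _ ≤ ∫⁻ ω, (ENNReal.ofReal (W ω) + A.indicator (fun _ => (1:ENNReal)) ω) ∂Q :=
      lintegral_mono hpt
    _ = ∫⁻ ω, ENNReal.ofReal (W ω) ∂Q + ∫⁻ ω, A.indicator (fun _ => (1:ENNReal)) ω ∂Q :=
      lintegral_add_left (ENNReal.measurable_ofReal.comp hWmeas) _
    _ = ∫⁻ ω, ENNReal.ofReal (W ω) ∂Q := by rw [hind, add_zero]
  have hIWle : ∫⁻ ω, ENNReal.ofReal (W ω) ∂Q ≤ ENNReal.ofReal y := by
    calc ∫⁻ ω, ENNReal.ofReal (W ω) ∂Q ≤ ∫⁻ ω, ENNReal.ofReal (Y T ω) ∂Q :=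
      lintegral_mono fun ω => ENNReal.ofReal_le_ofReal (hWle ω)
    _ = ENNReal.ofReal y := by
      rw [← ofReal_integral_eq_lintegral_ofReal hintYT
        (ae_of_all _ fun ω => (hY01 T ω).1), hIY]
  have hIW : ∫⁻ ω, ENNReal.ofReal (W ω) ∂Q = ENNReal.ofReal y :=
    le_antisymm hIWle hIWfull
  -- change of measure identity
  have hL : ∫⁻ ω, ENNReal.ofReal (g ω) ∂P
      = ENNReal.ofReal ((1 - y)⁻¹) * ∫⁻ ω, ENNReal.ofReal (W ω) ∂Q := by
    have hfm : Measurable fun ω => ENNReal.ofReal ((1 - Y T ω) / (1 - y)) :=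
      ENNReal.measurable_ofReal.comp ((measurable_const.sub hYTm.measurable).div_const _)
    have hgm' : Measurable fun ω => ENNReal.ofReal (g ω) :=
      ENNReal.measurable_ofReal.comp hgm
    rw [hPQ, lintegral_withDensity_eq_lintegral_mul Q hfm hgm']
    have hpt2 : ∀ ω, ENNReal.ofReal ((1 - Y T ω) / (1 - y)) * ENNReal.ofReal (g ω)
        = ENNReal.ofReal ((1 - y)⁻¹) * ENNReal.ofReal (W ω) := by
      intro ω
      rw [← ENNReal.ofReal_mul (div_nonneg (by linarith [(hY01 T ω).2]) h1y.le),
        ← ENNReal.ofReal_mul (inv_nonneg.mpr h1y.le)]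
      congr 1
      by_cases h : Y T ω < 1
      · have hne : 1 - Y T ω ≠ 0 := by
          have : (0:ℝ) < 1 - Y T ω := by linarith
          linarith
        simp only [hgdef, hWdef, if_pos h]
        field_simp
      · have h1 : Y T ω = 1 := le_antisymm (hY01 T ω).2 (not_lt.mp h)
        simp [hgdef, hWdef, if_neg h, h1]
    calc ∫⁻ ω, ((fun ω => ENNReal.ofReal ((1 - Y T ω) / (1 - y)))
          * fun ω => ENNReal.ofReal (g ω)) ω ∂Q
        = ∫⁻ ω, ENNReal.ofReal ((1 - y)⁻¹) * ENNReal.ofReal (W ω) ∂Q := by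
          refine lintegral_congr fun ω => ?_
          simp only [Pi.mul_apply]
          exact hpt2 ω
    _ = ENNReal.ofReal ((1 - y)⁻¹) * ∫⁻ ω, ENNReal.ofReal (W ω) ∂Q :=
      lintegral_const_mul _ (ENNReal.measurable_ofReal.comp hWmeas)
  have hkey : (1 - y)⁻¹ * y = x := by
    rw [hy]
    have h1 : 1 - x / (1 + x) = 1 / (1 + x) := by field_simp; ring
    rw [h1]
    field_simp
  have hLx : ∫⁻ ω, ENNReal.ofReal (g ω) ∂P = ENNReal.ofReal x := by
    rw [hL, hIW, ← ENNReal.ofReal_mul (inv_nonneg.mpr h1y.le), hkey]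
  -- convert to Bochner integral and compare with `hstrict`
  have hgint : ∫ ω, g ω ∂P = x := by
    rw [integral_eq_lintegral_of_nonneg_ae (ae_of_all _ hgnn)
      hgm.stronglyMeasurable.aestronglyMeasurable, hLx, ENNReal.toReal_ofReal hx.le]
  have hgX : g =ᵐ[P] X T := by
    filter_upwards [hYP] with ω hω
    have h1 : (0:ℝ) < 1 + X T ω := by linarith [hXnn T ω]
    show Y T ω / (1 - Y T ω) = X T ω
    rw [hω T]
    field_simp
    ring
  have : ∫ ω, X T ω ∂P = x := by
    rw [← integral_congr_ae hgX, hgint]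
  linarith
end

section
/- Let σ : ℝ → ℝ be continuous with σ(x) > 0 for x > 0 and σ(x) = 0 for x ≤ 0. Then there exists a sequence σ_n of continuous functions with: σ_n(x) > 0 for x > 0 and σ_n(x) = 0 for x ≤ 0; each σ_n is locally Hölder continuous on (0,∞) with some exponent δ_n ∈ (0,1]; σ_n ↑ σ pointwise; and for every compact K ⊂ (0,∞), max_{x∈K} (1/σ_n(x)² − 1/σ(x)²) < 1/n. -/
open Filter Topology Set Manifold

lemma exists_smooth_between (L U : ℝ → ℝ) (hL : Continuous L) (hU : Continuous U)
    (h : ∀ t, L t < U t) :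
    ∃ G : ℝ → ℝ, ContDiff ℝ 1 G ∧ ∀ t, L t < G t ∧ G t < U t := by
  obtain ⟨g, hg⟩ := exists_contMDiffMap_forall_mem_convex_of_local_const (𝓘(ℝ, ℝ)) (n := ⊤)
    (t := fun t : ℝ => Ioo (L t) (U t)) (F := ℝ) (fun t => convex_Ioo _ _)
    (fun x => ⟨(L x + U x) / 2, by
      have h1 : ∀ᶠ y in 𝓝 x, L y < (L x + U x) / 2 :=
        hL.continuousAt.eventually_lt continuousAt_const (by linarith [h x])
      have h2 : ∀ᶠ y in 𝓝 x, (L x + U x) / 2 < U y :=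
        continuousAt_const.eventually_lt hU.continuousAt (by linarith [h x])
      filter_upwards [h1, h2] with y hy1 hy2 using ⟨hy1, hy2⟩⟩)
  refine ⟨g, ?_, fun t => ⟨(hg t).1, (hg t).2⟩⟩
  exact (contMDiff_iff_contDiff.mp g.contMDiff).of_le (by exact_mod_cast le_top)

lemma holder_of_comp_log {G : ℝ → ℝ} (hG : ContDiff ℝ 1 G) {K : Set ℝ} (hK : K ⊆ Ioi 0)
    (hKc : IsCompact K) (f : ℝ → ℝ) (hf : ∀ x ∈ K, f x = G (Real.log x)) :
    ∃ C : NNReal, HolderOnWith C 1 f K := by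
  rcases K.eq_empty_or_nonempty with rfl | hne
  · exact ⟨1, fun x hx => absurd hx (notMem_empty x)⟩
  set a := sInf K with ha_def
  set b := sSup K with hb_def
  have haK : a ∈ K := hKc.sInf_mem hne
  have ha : 0 < a := hK haK
  have hKab : K ⊆ Icc a b := fun x hx => ⟨csInf_le hKc.bddBelow hx, le_csSup hKc.bddAbove hx⟩
  have hab : a ≤ b := (hKab haK).2
  have hlog : LipschitzOnWith (Real.toNNReal a⁻¹) Real.log (Icc a b) := by
    apply Convex.lipschitzOnWith_of_nnnorm_deriv_le (fun x hx => ?_) (fun x hx => ?_) (convex_Icc a b)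
    · exact Real.differentiableAt_log (ne_of_gt (lt_of_lt_of_le ha hx.1))
    · have hx0 : 0 < x := lt_of_lt_of_le ha hx.1
      rw [Real.deriv_log, ← NNReal.coe_le_coe, coe_nnnorm,
        Real.coe_toNNReal _ (inv_nonneg.mpr ha.le), Real.norm_eq_abs,
        abs_of_nonneg (inv_nonneg.mpr hx0.le)]
      exact inv_anti₀ ha hx.1
  obtain ⟨C, hC⟩ := (isCompact_Icc (a := Real.log a)
    (b := Real.log b)).exists_bound_of_continuousOn (hG.continuous_deriv le_rfl).continuousOn
  have hC0 : 0 ≤ C := le_trans (norm_nonneg _)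
    (hC (Real.log a) ⟨le_rfl, Real.log_le_log ha hab⟩)
  have hGlip : LipschitzOnWith (Real.toNNReal C) G (Icc (Real.log a) (Real.log b)) := by
    apply Convex.lipschitzOnWith_of_nnnorm_deriv_le
      (fun x _ => (hG.differentiable one_ne_zero).differentiableAt)
      (fun x hx => ?_) (convex_Icc _ _)
    rw [← NNReal.coe_le_coe, coe_nnnorm, Real.coe_toNNReal _ hC0]
    exact hC x hx
  have hmaps : MapsTo Real.log K (Icc (Real.log a) (Real.log b)) := fun x hx =>
    ⟨Real.log_le_log ha (hKab hx).1, Real.log_le_log (lt_of_lt_of_le ha (hKab hx).1) (hKab hx).2⟩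
  have hcomp : LipschitzOnWith (Real.toNNReal C * Real.toNNReal a⁻¹) (G ∘ Real.log) K :=
    hGlip.comp (hlog.mono hKab) hmaps
  have hflip : LipschitzOnWith (Real.toNNReal C * Real.toNNReal a⁻¹) f K := by
    intro x hx y hy
    rw [hf x hx, hf y hy]
    exact hcomp hx hy
  exact ⟨_, hflip.holderOnWith⟩


/-- Existence of the approximating sequence `σ_n` for a continuous
`σ` vanishing on `(-∞,0]` and positive on `(0,∞)`: each `σ_n` is continuous,
positive on `(0,∞)`, zero on `(-∞,0]`, locally Hölder continuous on `(0,∞)` with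
some exponent `δ_n ∈ (0,1]`, `σ_n ↑ σ` pointwise, and
`1/σ_n(x)² - 1/σ(x)² < 1/n` on every compact subset of `(0,∞)`. -/
theorem stmt17 (σ : ℝ → ℝ) (hc : Continuous σ)
    (hpos : ∀ x > (0:ℝ), 0 < σ x) (h0 : ∀ x ≤ (0:ℝ), σ x = 0) :
    ∃ σn : ℕ → ℝ → ℝ,
      (∀ n, Continuous (σn n)) ∧
      (∀ n, ∀ x > (0:ℝ), 0 < σn n x) ∧
      (∀ n, ∀ x ≤ (0:ℝ), σn n x = 0) ∧
      (∀ n, ∃ δ : NNReal, 0 < δ ∧ δ ≤ 1 ∧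
        ∀ K : Set ℝ, K ⊆ Ioi 0 → IsCompact K → ∃ C : NNReal, HolderOnWith C δ (σn n) K) ∧
      (∀ x, Monotone fun n => σn n x) ∧
      (∀ x, Tendsto (fun n => σn n x) atTop (𝓝 (σ x))) ∧
      (∀ n : ℕ, ∀ K : Set ℝ, K ⊆ Ioi 0 → IsCompact K →
        ∀ x ∈ K, 1 / σn n x ^ 2 - 1 / σ x ^ 2 < 1 / ((n : ℝ) + 1)) := by
  -- the lower envelope
  set l : ℕ → ℝ → ℝ := fun n x => σ x / Real.sqrt (1 + σ x ^ 2 / ((n : ℝ) + 2)) with hl_def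
  have hD : ∀ (n : ℕ) (x : ℝ), 0 < 1 + σ x ^ 2 / ((n : ℝ) + 2) := by
    intro n x; positivity
  have hsqrt_pos : ∀ (n : ℕ) (x : ℝ), 0 < Real.sqrt (1 + σ x ^ 2 / ((n : ℝ) + 2)) := by
    intro n x; exact Real.sqrt_pos.mpr (hD n x)
  have hl_cont : ∀ n, Continuous (l n) := by
    intro n
    apply hc.div (Real.continuous_sqrt.comp
      (continuous_const.add ((hc.pow 2).div_const _)))
    intro x; exact ne_of_gt (hsqrt_pos n x)
  have hl_pos : ∀ (n : ℕ) (x : ℝ), 0 < x → 0 < l n x := by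
    intro n x hx; exact div_pos (hpos x hx) (hsqrt_pos n x)
  have hl_lt : ∀ (n : ℕ) (x : ℝ), 0 < x → l n x < σ x := by
    intro n x hx
    have h1 : 1 < Real.sqrt (1 + σ x ^ 2 / ((n : ℝ) + 2)) := by
      rw [show (1:ℝ) = Real.sqrt 1 by simp]
      apply Real.sqrt_lt_sqrt zero_le_one
      have := hpos x hx
      have : 0 < σ x ^ 2 / ((n : ℝ) + 2) := by positivity
      simpa [Real.sqrt_one] using by linarith
    calc l n x < σ x / 1 := by
          apply div_lt_div_of_pos_left (hpos x hx) zero_lt_one h1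
      _ = σ x := div_one _
  -- the invariant
  set P : ℕ → (ℝ → ℝ) → Prop := fun n g => ContDiff ℝ 1 g ∧
    ∀ t, l n (Real.exp t) < g t ∧ g t < σ (Real.exp t) with hP_def
  have hU'cont : Continuous fun t => σ (Real.exp t) := hc.comp Real.continuous_exp
  have base : ∃ g, P 0 g := by
    obtain ⟨g, hg1, hg2⟩ := exists_smooth_between (fun t => l 0 (Real.exp t)) _
      ((hl_cont 0).comp Real.continuous_exp) hU'cont
      (fun t => hl_lt 0 _ (Real.exp_pos t))
    exact ⟨g, hg1, hg2⟩
  have step : ∀ n (g : ℝ → ℝ), P n g → ∃ g', P (n+1) g' ∧ ∀ t, g t ≤ g' t := by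
    intro n g hg
    obtain ⟨g', hg'1, hg'2⟩ := exists_smooth_between
      (fun t => max (l (n+1) (Real.exp t)) (g t)) _
      (((hl_cont (n+1)).comp Real.continuous_exp).max hg.1.continuous) hU'cont
      (fun t => max_lt (hl_lt (n+1) _ (Real.exp_pos t)) (hg.2 t).2)
    refine ⟨g', ⟨hg'1, fun t => ⟨lt_of_le_of_lt (le_max_left _ _) (hg'2 t).1,
      (hg'2 t).2⟩⟩, fun t => le_of_lt (lt_of_le_of_lt (le_max_right _ _) (hg'2 t).1)⟩
  obtain ⟨g0, hg0⟩ := base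
  let seq : ∀ n : ℕ, {g : ℝ → ℝ // P n g} := fun n =>
    Nat.rec ⟨g0, hg0⟩
      (fun k ih => ⟨(step k ih.1 ih.2).choose, (step k ih.1 ih.2).choose_spec.1⟩) n
  have hstep : ∀ n t, (seq n).1 t ≤ (seq (n+1)).1 t := fun n t =>
    (step n (seq n).1 (seq n).2).choose_spec.2 t
  -- the approximating sequence
  have hub : ∀ (n : ℕ) (x : ℝ), 0 < x →
      l n x < (seq n).1 (Real.log x) ∧ (seq n).1 (Real.log x) < σ x := by
    intro n x hx
    have := (seq n).2.2 (Real.log x)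
    rwa [Real.exp_log hx] at this
  refine ⟨fun n x => if 0 < x then (seq n).1 (Real.log x) else 0, ?_, ?_, ?_, ?_, ?_, ?_, ?_⟩
  · -- continuity
    intro n
    rw [continuous_iff_continuousAt]
    intro x
    rcases lt_trichotomy x 0 with hx | rfl | hx
    · have hev : ∀ᶠ y in 𝓝 x,
          (0:ℝ) = if 0 < y then (seq n).1 (Real.log y) else 0 := by
        filter_upwards [Iio_mem_nhds hx] with y hy
        exact (if_neg (not_lt.mpr hy.le)).symm
      exact continuousAt_const.congr hev
    · have hσ0 : σ 0 = 0 := h0 0 le_rfl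
      have htd : Tendsto (fun y => if 0 < y then (seq n).1 (Real.log y) else 0)
          (𝓝 0) (𝓝 0) := by
        apply tendsto_of_tendsto_of_tendsto_of_le_of_le (tendsto_const_nhds (x := (0:ℝ)))
          (by simpa [hσ0] using hc.tendsto 0) ?_ ?_
        · intro y
          by_cases hy : 0 < y
          · simp only [if_pos hy]
            exact ((hl_pos n y hy).trans (hub n y hy).1).le
          · simp only [if_neg hy]
            exact le_rfl
        · intro y
          by_cases hy : 0 < y
          · simp only [if_pos hy]
            exact (hub n y hy).2.le
          · simp only [if_neg hy]
            exact (h0 y (not_lt.mp hy)).ge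
      simpa [ContinuousAt, lt_self_iff_false] using htd
    · have hev : ∀ᶠ y in 𝓝 x,
          ((seq n).1 ∘ Real.log) y = if 0 < y then (seq n).1 (Real.log y) else 0 := by
        filter_upwards [Ioi_mem_nhds hx] with y hy
        exact (if_pos hy).symm
      exact (((seq n).2.1.continuous.continuousAt).comp
        (Real.continuousAt_log (ne_of_gt hx))).congr hev
  · -- positivity
    intro n x hx
    simp only [if_pos hx]
    exact (hl_pos n x hx).trans (hub n x hx).1
  · -- zero on nonpositives
    intro n x hx
    exact if_neg (not_lt.mpr hx)
  · -- Hölder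
    intro n
    exact ⟨1, one_pos, le_rfl, fun K hK hKc =>
      holder_of_comp_log (seq n).2.1 hK hKc _ (fun x hx => if_pos (hK hx))⟩
  · -- monotone
    intro x
    apply monotone_nat_of_le_succ
    intro n
    by_cases hx : 0 < x
    · simp only [if_pos hx]
      exact hstep n (Real.log x)
    · simp only [if_neg hx]
      exact le_rfl
  · -- tendsto
    intro x
    by_cases hx : 0 < x
    · have hlow : Tendsto (fun n : ℕ => l n x) atTop (𝓝 (σ x)) := by
        have h1 : Tendsto (fun n : ℕ => ((n:ℝ) + 2)) atTop atTop :=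
          tendsto_atTop_add_const_right _ 2 tendsto_natCast_atTop_atTop
        have h2 : Tendsto (fun n : ℕ => σ x ^ 2 / ((n:ℝ)+2)) atTop (𝓝 0) :=
          Tendsto.div_atTop tendsto_const_nhds h1
        have h3 : Tendsto (fun n : ℕ => Real.sqrt (1 + σ x ^ 2 / ((n:ℝ)+2)))
            atTop (𝓝 1) := by
          have hadd : Tendsto (fun n : ℕ => 1 + σ x ^ 2 / ((n:ℝ)+2)) atTop (𝓝 1) := by
            simpa using (tendsto_const_nhds (x := (1:ℝ))).add h2
          have := (Real.continuous_sqrt.tendsto 1).comp hadd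
          rw [Real.sqrt_one] at this
          exact this
        have := Tendsto.div (tendsto_const_nhds (x := σ x)) h3 one_ne_zero
        rw [div_one] at this
        exact this
      apply tendsto_of_tendsto_of_tendsto_of_le_of_le hlow tendsto_const_nhds ?_ ?_
      · intro n
        simp only [if_pos hx]
        exact (hub n x hx).1.le
      · intro n
        simp only [if_pos hx]
        exact (hub n x hx).2.le
    · have hσx : σ x = 0 := h0 x (not_lt.mp hx)
      simp only [if_neg hx, hσx]
      exact tendsto_const_nhds
  · -- the quantitative bound
    intro n K hK hKc x hxK
    have hx : 0 < x := hK hxK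
    simp only [if_pos hx]
    have h1 : l n x < (seq n).1 (Real.log x) := (hub n x hx).1
    have h2 : 0 < l n x := hl_pos n x hx
    have hs := hpos x hx
    have hD' := hD n x
    have hn2 : ((n:ℝ) + 2) ≠ 0 := by positivity
    have hkey : 1 / (l n x) ^ 2 = 1 / σ x ^ 2 + 1 / ((n:ℝ)+2) := by
      simp only [hl_def]
      rw [div_pow, Real.sq_sqrt hD'.le]
      field_simp
    have h1' : 1 / (seq n).1 (Real.log x) ^ 2 < 1 / (l n x) ^ 2 := by
      apply one_div_lt_one_div_of_lt (by positivity)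
      have := pow_lt_pow_left₀ h1 h2.le (n := 2) two_ne_zero
      exact this
    have h3 : 1 / ((n:ℝ)+2) < 1 / ((n:ℝ)+1) := by
      apply one_div_lt_one_div_of_lt (by positivity)
      linarith
    linarith
end
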